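/- arXiv:1910.14381 — 2 statements merged into one kernel-verified Lean document; each statement's English description precedes it below -/
import Mathlib

section
/- Completeness of commutative Kleene algebra: for all commutative regular expressions e and f over a finite alphabet Σ, e ≡ f if and only if ⟦e⟧ = ⟦f⟧. -/
namespace CKAnote

/-- Commutative regular expressions over an alphabet `α`. -/
inductive CRE (α : Type) where
  | zero : CRE α
  | one : CRE α
  | letter : α → CRE α
  | mul : CRE α → CRE α → CRE α
  | union : CRE α → CRE α → CRE α
  | star : CRE α → CRE α

variable {α : Type} [Fintype α] [DecidableEq α]

/-- Semantics of a commutative regular expression as a set of Parikh vectors. -/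
def sem : CRE α → Set (α → ℕ)
  | .zero => ∅
  | .one => {0}
  | .letter a => {Pi.single a 1}
  | .mul e f => {w | ∃ u ∈ sem e, ∃ v ∈ sem f, w = u + v}
  | .union e f => sem e ∪ sem f
  | .star e => ↑(AddSubmonoid.closure (sem e))

/-- Provable equality: the smallest congruence containing the axioms of
commutative Kleene algebra (where `e ≤ f` abbreviates `e ∪ f ≡ f`). -/
inductive CKA : CRE α → CRE α → Prop
  | refl (e : CRE α) : CKA e e
  | symm {e f : CRE α} : CKA e f → CKA f e
  | trans {e f g : CRE α} : CKA e f → CKA f g → CKA e g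
  | mul_congr {e e' f f' : CRE α} : CKA e e' → CKA f f' → CKA (e.mul f) (e'.mul f')
  | union_congr {e e' f f' : CRE α} : CKA e e' → CKA f f' → CKA (e.union f) (e'.union f')
  | star_congr {e e' : CRE α} : CKA e e' → CKA e.star e'.star
  | mul_assoc (e f g : CRE α) : CKA (e.mul (f.mul g)) ((e.mul f).mul g)
  | mul_comm (e f : CRE α) : CKA (e.mul f) (f.mul e)
  | one_mul (e : CRE α) : CKA (CRE.one.mul e) e
  | union_assoc (e f g : CRE α) : CKA (e.union (f.union g)) ((e.union f).union g)
  | union_comm (e f : CRE α) : CKA (e.union f) (f.union e)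
  | union_idem (e : CRE α) : CKA (e.union e) e
  | zero_union (e : CRE α) : CKA (CRE.zero.union e) e
  | zero_mul (e : CRE α) : CKA (CRE.zero.mul e) CRE.zero
  | left_distrib (e f g : CRE α) : CKA (e.mul (f.union g)) ((e.mul f).union (e.mul g))
  | star_unfold (e : CRE α) : CKA ((CRE.one.union (e.mul e.star)).union e.star) e.star
  | star_lfp {e f : CRE α} : CKA ((e.mul f).union f) f → CKA ((e.star.mul f).union f) f

/-- `e ≤ f`, i.e. `e ∪ f ≡ f`. -/
def leq (e f : CRE α) : Prop := CKA (e.union f) f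

/-- `e^n`, the `n`-fold product of `e` with itself. -/
def pow (e : CRE α) : ℕ → CRE α
  | 0 => CRE.one
  | n + 1 => e.mul (pow e n)

/-- `e^{<n}`, i.e. `(e ∪ 1)^(n-1)` for `n > 0` and `0` for `n = 0`. -/
def ltPow (e : CRE α) : ℕ → CRE α
  | 0 => CRE.zero
  | n + 1 => pow (e.union CRE.one) n

/-- Finite union of a list of expressions. -/
def unionList : List (CRE α) → CRE α
  | [] => CRE.zero
  | e :: l => e.union (unionList l)

/-- Finite product of a list of expressions. -/
def prodList : List (CRE α) → CRE α
  | [] => CRE.one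
  | e :: l => e.mul (prodList l)

/-- `expr(u)`: the product over `a ∈ α` of `u a` copies of the letter `a`. -/
noncomputable def exprVec (u : α → ℕ) : CRE α :=
  prodList ((Finset.univ : Finset α).toList.map (fun a => pow (CRE.letter a) (u a)))

/-- The union `⋃_{b ∈ B} expr(b)` for a finite set of Parikh vectors `B`. -/
noncomputable def unionVecs (B : Finset (α → ℕ)) : CRE α :=
  unionList (B.toList.map exprVec)

/-- The linear expression `expr(u) · (⋃_{b ∈ B} expr(b))*`. -/
noncomputable def linExpr (u : α → ℕ) (B : Finset (α → ℕ)) : CRE α :=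
  (exprVec u).mul (unionVecs B).star

/-- A finite set of Parikh vectors is independent when every Parikh vector
admits at most one representation as an `ℕ`-linear combination of its elements. -/
def Independent (B : Finset (α → ℕ)) : Prop :=
  ∀ c d : (α → ℕ) → ℕ, (∑ b ∈ B, c b • b) = (∑ b ∈ B, d b • b) → ∀ b ∈ B, c b = d b

/-- The semilinear expression associated to a list of linear data:
the finite union of the corresponding linear expressions. -/
noncomputable def semiLin (L : List ((α → ℕ) × Finset (α → ℕ))) : CRE α :=
  unionList (L.map (fun p => linExpr p.1 p.2))

/-- The dimension of a semilinear expression: the maximum of the dimensions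
of its linear components. -/
def dimSL (L : List ((α → ℕ) × Finset (α → ℕ))) : ℕ :=
  (L.map (fun p => p.2.card)).foldr max 0

/-- Finitary (star-free) expressions. -/
def NoStar : CRE α → Prop
  | .zero => True
  | .one => True
  | .letter _ => True
  | .mul e f => NoStar e ∧ NoStar f
  | .union e f => NoStar e ∧ NoStar f
  | .star _ => False

/-- Coordinatewise embedding of `ℕ^α` into `ℚ^α`. -/
def toQ (v : α → ℕ) : α → ℚ := fun a => (v a : ℚ)

/-! ### Basic toolkit for provable equality and inequality -/

section Toolkit
set_option linter.unusedSectionVars false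

local infixl:70 " ⬝ " => CRE.mul
local infixl:65 " ⋓ " => CRE.union
local infix:50 " ≈ " => CKA
local infix:50 " ≼ " => leq

namespace CKA

theorem rfl' {e : CRE α} : e ≈ e := CKA.refl e

instance : @Trans (CRE α) (CRE α) (CRE α) CKA CKA CKA := ⟨CKA.trans⟩

theorem le_refl (e : CRE α) : e ≼ e := CKA.union_idem e

theorem le_of_eq {e f : CRE α} (h : e ≈ f) : e ≼ f :=
  ((CKA.union_congr h rfl').trans (CKA.union_idem f))

theorem ge_of_eq {e f : CRE α} (h : e ≈ f) : f ≼ e :=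
  ((CKA.union_congr h.symm rfl').trans (CKA.union_idem e))

theorem le_trans {e f g : CRE α} (h1 : e ≼ f) (h2 : f ≼ g) : e ≼ g := by
  have : e ⋓ g ≈ e ⋓ (f ⋓ g) := CKA.union_congr rfl' h2.symm
  exact this.trans ((CKA.union_assoc e f g).trans ((CKA.union_congr h1 rfl').trans h2))

theorem le_antisymm {e f : CRE α} (h1 : e ≼ f) (h2 : f ≼ e) : e ≈ f :=
  h2.symm.trans ((CKA.union_comm f e).trans h1)

instance : @Trans (CRE α) (CRE α) (CRE α) leq leq leq := ⟨le_trans⟩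
instance : @Trans (CRE α) (CRE α) (CRE α) CKA leq leq := ⟨fun h h' => le_trans (le_of_eq h) h'⟩
instance : @Trans (CRE α) (CRE α) (CRE α) leq CKA leq := ⟨fun h h' => le_trans h (le_of_eq h')⟩

theorem le_union_left (e f : CRE α) : e ≼ e ⋓ f :=
  (CKA.union_assoc e e f).trans (CKA.union_congr (CKA.union_idem e) rfl')

theorem le_union_right (e f : CRE α) : f ≼ e ⋓ f := by
  have : f ⋓ (e ⋓ f) ≈ e ⋓ (f ⋓ f) :=
    (CKA.union_assoc f e f).trans ((CKA.union_congr (CKA.union_comm f e) rfl').trans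
      (CKA.union_assoc e f f).symm)
  exact this.trans (CKA.union_congr rfl' (CKA.union_idem f))

theorem union_le {e f g : CRE α} (h1 : e ≼ g) (h2 : f ≼ g) : e ⋓ f ≼ g :=
  (CKA.union_assoc e f g).symm.trans ((CKA.union_congr rfl' h2).trans h1)

theorem union_mono {e e' f f' : CRE α} (h1 : e ≼ e') (h2 : f ≼ f') : e ⋓ f ≼ e' ⋓ f' :=
  union_le (le_trans h1 (le_union_left e' f')) (le_trans h2 (le_union_right e' f'))

theorem zero_le (e : CRE α) : CRE.zero ≼ e := CKA.zero_union e

theorem mul_one' (e : CRE α) : e ⬝ CRE.one ≈ e := (CKA.mul_comm e CRE.one).trans (CKA.one_mul e)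

theorem mul_zero' (e : CRE α) : e ⬝ CRE.zero ≈ CRE.zero :=
  (CKA.mul_comm e CRE.zero).trans (CKA.zero_mul e)

theorem right_distrib' (e f g : CRE α) : (e ⋓ f) ⬝ g ≈ e ⬝ g ⋓ f ⬝ g :=
  (CKA.mul_comm _ g).trans ((CKA.left_distrib g e f).trans
    (CKA.union_congr (CKA.mul_comm g e) (CKA.mul_comm g f)))

theorem mul_le_mul {e e' f f' : CRE α} (h1 : e ≼ e') (h2 : f ≼ f') : e ⬝ f ≼ e' ⬝ f' := by
  have step1 : e ⬝ f ≼ e' ⬝ f := (right_distrib' e e' f).symm.trans (CKA.mul_congr h1 rfl')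
  have step2 : e' ⬝ f ≼ e' ⬝ f' := (CKA.left_distrib e' f f').symm.trans (CKA.mul_congr rfl' h2)
  exact le_trans step1 step2

theorem mul_left_comm' (e f g : CRE α) : e ⬝ (f ⬝ g) ≈ f ⬝ (e ⬝ g) :=
  (CKA.mul_assoc e f g).trans ((CKA.mul_congr (CKA.mul_comm e f) rfl').trans
    (CKA.mul_assoc f e g).symm)

theorem star_unfold_le (e : CRE α) : CRE.one ⋓ e ⬝ e.star ≼ e.star := CKA.star_unfold e

theorem one_le_star (e : CRE α) : CRE.one ≼ e.star :=
  le_trans (le_union_left _ _) (star_unfold_le e)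

theorem mul_star_le (e : CRE α) : e ⬝ e.star ≼ e.star :=
  le_trans (le_union_right _ _) (star_unfold_le e)

theorem le_star (e : CRE α) : e ≼ e.star :=
  le_trans (le_of_eq (mul_one' e).symm)
    (le_trans (mul_le_mul (le_refl e) (one_le_star e)) (mul_star_le e))

theorem star_absorb {e f : CRE α} (h : e ⬝ f ≼ f) : e.star ⬝ f ≼ f := CKA.star_lfp h

theorem star_mul_star (e : CRE α) : e.star ⬝ e.star ≈ e.star :=
  le_antisymm (star_absorb (mul_star_le e))
    (le_trans (le_of_eq (CKA.one_mul e.star).symm)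
      (mul_le_mul (one_le_star e) (le_refl e.star)))

theorem star_le_star {e f : CRE α} (h : e ≼ f.star) : e.star ≼ f.star := by
  have h1 : e ⬝ f.star ≼ f.star :=
    le_trans (mul_le_mul h (le_refl f.star)) (le_of_eq (star_mul_star f))
  have h2 : e.star ⬝ f.star ≼ f.star := star_absorb h1
  calc e.star ≈ e.star ⬝ CRE.one := (mul_one' e.star).symm
    _ ≼ e.star ⬝ f.star := mul_le_mul (le_refl _) (one_le_star f)
    _ ≼ f.star := h2

theorem star_mono {e f : CRE α} (h : e ≼ f) : e.star ≼ f.star :=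
  star_le_star (le_trans h (le_star f))

theorem star_one : (CRE.one : CRE α).star ≈ CRE.one :=
  le_antisymm (le_trans (le_of_eq (mul_one' _).symm)
    (star_absorb (le_of_eq (mul_one' _)))) (one_le_star _)

theorem star_zero : (CRE.zero : CRE α).star ≈ CRE.one :=
  le_antisymm (le_trans (le_of_eq (mul_one' _).symm)
    (star_absorb (le_trans (le_of_eq (CKA.zero_mul _)) (zero_le _)))) (one_le_star _)

theorem star_union (e f : CRE α) : (e ⋓ f).star ≈ e.star ⬝ f.star := by
  apply le_antisymm
  · have habs : (e ⋓ f) ⬝ (e.star ⬝ f.star) ≼ e.star ⬝ f.star := by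
      have h1 : e ⬝ (e.star ⬝ f.star) ≼ e.star ⬝ f.star :=
        le_trans (le_of_eq (CKA.mul_assoc e e.star f.star))
          (mul_le_mul (mul_star_le e) (le_refl _))
      have h2 : f ⬝ (e.star ⬝ f.star) ≼ e.star ⬝ f.star := by
        calc f ⬝ (e.star ⬝ f.star) ≈ e.star ⬝ (f ⬝ f.star) := mul_left_comm' f e.star f.star
          _ ≼ e.star ⬝ f.star := mul_le_mul (le_refl _) (mul_star_le f)
      exact le_trans (le_of_eq (right_distrib' e f _)) (union_le h1 h2)
    calc (e ⋓ f).star ≈ (e ⋓ f).star ⬝ CRE.one := (mul_one' _).symm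
      _ ≼ (e ⋓ f).star ⬝ (e.star ⬝ f.star) :=
        mul_le_mul (le_refl _) (le_trans (one_le_star e)
          (le_trans (le_of_eq (mul_one' e.star).symm)
            (mul_le_mul (le_refl _) (one_le_star f))))
      _ ≼ e.star ⬝ f.star := star_absorb habs
  · exact le_trans (mul_le_mul (star_mono (le_union_left e f))
      (star_mono (le_union_right e f))) (le_of_eq (star_mul_star _))

end CKA

end Toolkit

section Lists
set_option linter.unusedSectionVars false

local infixl:70 " ⬝ " => CRE.mul
local infixl:65 " ⋓ " => CRE.union
local infix:50 " ≈ " => CKA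
local infix:50 " ≼ " => leq

namespace CKA

theorem mul_mul_mul_comm' (a b c d : CRE α) : (a ⬝ b) ⬝ (c ⬝ d) ≈ (a ⬝ c) ⬝ (b ⬝ d) := by
  calc (a ⬝ b) ⬝ (c ⬝ d) ≈ a ⬝ (b ⬝ (c ⬝ d)) := (CKA.mul_assoc _ _ _).symm
    _ ≈ a ⬝ (c ⬝ (b ⬝ d)) := CKA.mul_congr rfl' (mul_left_comm' _ _ _)
    _ ≈ (a ⬝ c) ⬝ (b ⬝ d) := CKA.mul_assoc _ _ _

theorem pow_add' (e : CRE α) (m n : ℕ) : pow e (m + n) ≈ pow e m ⬝ pow e n := by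
  induction m with
  | zero => simpa [pow] using (CKA.one_mul (pow e n)).symm
  | succ m ih =>
    have : m + 1 + n = (m + n) + 1 := by omega
    rw [this]
    calc pow e (m + n + 1) ≈ e ⬝ (pow e m ⬝ pow e n) := CKA.mul_congr rfl' ih
      _ ≈ (e ⬝ pow e m) ⬝ pow e n := CKA.mul_assoc _ _ _

theorem pow_le_star {e f : CRE α} (h : e ≼ f.star) (n : ℕ) : pow e n ≼ f.star := by
  induction n with
  | zero => exact one_le_star f
  | succ n ih =>
    calc pow e (n+1) ≼ f.star ⬝ f.star := mul_le_mul h ih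
      _ ≈ f.star := star_mul_star f

theorem le_unionList {l : List (CRE α)} {e : CRE α} (h : e ∈ l) : e ≼ unionList l := by
  induction l with
  | nil => cases h
  | cons a l ih =>
    rcases List.mem_cons.1 h with rfl | h
    · exact le_union_left _ _
    · exact le_trans (ih h) (le_union_right _ _)

theorem unionList_le {l : List (CRE α)} {g : CRE α} (h : ∀ e ∈ l, e ≼ g) : unionList l ≼ g := by
  induction l with
  | nil => exact zero_le g
  | cons a l ih =>
    exact union_le (h a (List.mem_cons_self)) (ih fun e he => h e (List.mem_cons_of_mem a he))

theorem unionList_append (l l' : List (CRE α)) :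
    unionList (l ++ l') ≈ unionList l ⋓ unionList l' := by
  induction l with
  | nil => exact ((CKA.zero_union _).symm : unionList l' ≈ _)
  | cons a l ih =>
    calc a ⋓ unionList (l ++ l') ≈ a ⋓ (unionList l ⋓ unionList l') := CKA.union_congr rfl' ih
      _ ≈ (a ⋓ unionList l) ⋓ unionList l' := CKA.union_assoc _ _ _

theorem mul_unionList (g : CRE α) (l : List (CRE α)) :
    g ⬝ unionList l ≈ unionList (l.map (fun e => g ⬝ e)) := by
  induction l with
  | nil => exact mul_zero' g
  | cons a l ih =>
    calc g ⬝ (a ⋓ unionList l) ≈ g ⬝ a ⋓ g ⬝ unionList l := CKA.left_distrib _ _ _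
      _ ≈ g ⬝ a ⋓ unionList (l.map (fun e => g ⬝ e)) := CKA.union_congr rfl' ih

theorem unionList_mul (l : List (CRE α)) (g : CRE α) :
    unionList l ⬝ g ≈ unionList (l.map (fun e => e ⬝ g)) := by
  calc unionList l ⬝ g ≈ g ⬝ unionList l := CKA.mul_comm _ _
    _ ≈ unionList (l.map (fun e => g ⬝ e)) := mul_unionList g l
    _ ≈ unionList (l.map (fun e => e ⬝ g)) := by
        induction l with
        | nil => exact rfl'
        | cons a l ih => exact CKA.union_congr (CKA.mul_comm g a) ih

theorem prodList_map_congr {l : List β} {f g : β → CRE α}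
    (h : ∀ b ∈ l, f b ≈ g b) : prodList (l.map f) ≈ prodList (l.map g) := by
  induction l with
  | nil => exact rfl'
  | cons a l ih =>
    exact CKA.mul_congr (h a (List.mem_cons_self))
      (ih fun b hb => h b (List.mem_cons_of_mem a hb))

theorem prodList_ones (l : List β) : prodList (l.map (fun _ => (CRE.one : CRE α))) ≈ CRE.one := by
  induction l with
  | nil => exact rfl'
  | cons a l ih => exact (CKA.one_mul _).trans ih

theorem prodList_map_mul (l : List β) (f g : β → CRE α) :
    prodList (l.map (fun b => f b ⬝ g b)) ≈ prodList (l.map f) ⬝ prodList (l.map g) := by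
  induction l with
  | nil => exact (CKA.one_mul _).symm
  | cons a l ih =>
    calc (f a ⬝ g a) ⬝ prodList (l.map (fun b => f b ⬝ g b))
        ≈ (f a ⬝ g a) ⬝ (prodList (l.map f) ⬝ prodList (l.map g)) := CKA.mul_congr rfl' ih
      _ ≈ (f a ⬝ prodList (l.map f)) ⬝ (g a ⬝ prodList (l.map g)) := mul_mul_mul_comm' _ _ _ _

theorem exprVec_add (u v : α → ℕ) : exprVec (u + v) ≈ exprVec u ⬝ exprVec v := by
  unfold exprVec
  calc prodList (Finset.univ.toList.map (fun a => pow (CRE.letter a) ((u + v) a)))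
      ≈ prodList (Finset.univ.toList.map
          (fun a => pow (CRE.letter a) (u a) ⬝ pow (CRE.letter a) (v a))) :=
        prodList_map_congr (fun a _ => pow_add' _ _ _)
    _ ≈ _ := prodList_map_mul _ _ _

theorem exprVec_zero : exprVec (0 : α → ℕ) ≈ CRE.one := by
  have : (fun a => pow (CRE.letter a) ((0 : α → ℕ) a)) = (fun _ : α => (CRE.one : CRE α)) := rfl
  unfold exprVec
  rw [this]
  exact prodList_ones _

theorem prodList_single {l : List α} {a : α} (ha : a ∈ l) (hnd : l.Nodup) :
    prodList (l.map (fun b => if b = a then CRE.letter a else CRE.one)) ≈ CRE.letter a := by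
  induction l with
  | nil => cases ha
  | cons b l ih =>
    rw [List.map_cons]
    show (if b = a then CRE.letter a else CRE.one) ⬝ _ ≈ _
    by_cases hba : b = a
    · subst hba
      have hb : b ∉ l := (List.nodup_cons.1 hnd).1
      rw [if_pos rfl]
      have h1 : prodList (l.map (fun c => if c = b then CRE.letter b else CRE.one))
          ≈ CRE.one := by
        refine (prodList_map_congr (fun c hc => ?_)).trans (prodList_ones l)
        have : c ≠ b := fun h => hb (h ▸ hc)
        rw [if_neg this]; exact rfl'
      exact (CKA.mul_congr rfl' h1).trans (mul_one' _)
    · have ha' : a ∈ l := by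
        rcases List.mem_cons.1 ha with h | h
        · exact absurd h.symm hba
        · exact h
      rw [if_neg hba]
      exact (CKA.one_mul _).trans (ih ha' (List.nodup_cons.1 hnd).2)

theorem exprVec_single (a : α) : exprVec (Pi.single a 1) ≈ CRE.letter a := by
  unfold exprVec
  have step : prodList (Finset.univ.toList.map
        (fun b => pow (CRE.letter b) ((Pi.single a 1 : α → ℕ) b)))
      ≈ prodList (Finset.univ.toList.map (fun b => if b = a then CRE.letter a else CRE.one)) := by
    apply prodList_map_congr
    intro b _
    by_cases hb : b = a
    · subst hb
      rw [if_pos rfl]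
      have : (Pi.single b 1 : α → ℕ) b = 1 := Pi.single_eq_same b 1
      rw [this]
      exact mul_one' _
    · rw [if_neg hb]
      have : (Pi.single a 1 : α → ℕ) b = 0 := Pi.single_eq_of_ne hb 1
      rw [this]
      exact rfl'
  exact step.trans
    (prodList_single (Finset.mem_toList.2 (Finset.mem_univ a)) (Finset.nodup_toList _))

theorem le_unionVecs {B : Finset (α → ℕ)} {v : α → ℕ} (h : v ∈ B) :
    exprVec v ≼ unionVecs B :=
  le_unionList (List.mem_map.2 ⟨v, Finset.mem_toList.2 h, rfl⟩)

theorem unionVecs_le {B : Finset (α → ℕ)} {g : CRE α} (h : ∀ v ∈ B, exprVec v ≼ g) :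
    unionVecs B ≼ g :=
  unionList_le (by
    intro e he
    rcases List.mem_map.1 he with ⟨v, hv, rfl⟩
    exact h v (Finset.mem_toList.1 hv))

theorem mem_closure_le_star {B : Finset (α → ℕ)} {v : α → ℕ}
    (h : v ∈ AddSubmonoid.closure (B : Set (α → ℕ))) :
    exprVec v ≼ (unionVecs B).star := by
  induction h using AddSubmonoid.closure_induction with
  | mem x hx => exact le_trans (le_unionVecs hx) (le_star _)
  | zero => exact le_trans (le_of_eq exprVec_zero) (one_le_star _)
  | add x y _ _ hx hy =>
    calc exprVec (x + y) ≈ exprVec x ⬝ exprVec y := exprVec_add x y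
      _ ≼ (unionVecs B).star ⬝ (unionVecs B).star := mul_le_mul hx hy
      _ ≈ (unionVecs B).star := star_mul_star _

theorem star_le_star_closure {G G' : Finset (α → ℕ)}
    (h : ∀ v ∈ G, v ∈ AddSubmonoid.closure (G' : Set (α → ℕ))) :
    (unionVecs G).star ≼ (unionVecs G').star :=
  star_le_star (unionVecs_le fun v hv => mem_closure_le_star (h v hv))

end CKA

end Lists

section Semantics
set_option linter.unusedSectionVars false
open Pointwise

local infix:50 " ≈ " => CKA
local infix:50 " ≼ " => leq

theorem sem_mul' (e f : CRE α) : sem (e.mul f) = sem e + sem f := by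
  ext w
  simp only [sem, Set.mem_setOf_eq, Set.mem_add]
  constructor
  · rintro ⟨u, hu, v, hv, rfl⟩; exact ⟨u, hu, v, hv, rfl⟩
  · rintro ⟨u, hu, v, hv, rfl⟩; exact ⟨u, hu, v, hv, rfl⟩

theorem sem_one' : sem (CRE.one : CRE α) = 0 := rfl

theorem sem_zero' : sem (CRE.zero : CRE α) = ∅ := rfl

theorem sem_union' (e f : CRE α) : sem (e.union f) = sem e ∪ sem f := rfl

theorem sem_star'' (e : CRE α) : sem e.star = (AddSubmonoid.closure (sem e) : Set (α → ℕ)) := rfl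

/-- Soundness of the axioms. -/
theorem soundness {e f : CRE α} (h : CKA e f) : sem e = sem f := by
  induction h with
  | refl e => rfl
  | symm _ ih => exact ih.symm
  | trans _ _ ih1 ih2 => exact ih1.trans ih2
  | mul_congr _ _ ih1 ih2 => rw [sem_mul', sem_mul', ih1, ih2]
  | union_congr _ _ ih1 ih2 => rw [sem_union', sem_union', ih1, ih2]
  | star_congr _ ih => rw [sem_star'', sem_star'', ih]
  | mul_assoc e f g => simp only [sem_mul']; rw [add_assoc]
  | mul_comm e f => simp only [sem_mul']; rw [add_comm]
  | one_mul e => rw [sem_mul', sem_one', zero_add]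
  | union_assoc e f g => simp only [sem_union']; rw [Set.union_assoc]
  | union_comm e f => simp only [sem_union']; rw [Set.union_comm]
  | union_idem e => simp only [sem_union']; rw [Set.union_self]
  | zero_union e => simp only [sem_union', sem_zero']; rw [Set.empty_union]
  | zero_mul e => rw [sem_mul', sem_zero']; exact Set.empty_add
  | left_distrib e f g =>
      simp only [sem_union', sem_mul']
      rw [Set.add_union]
  | star_unfold e =>
      simp only [sem_union', sem_mul', sem_star'', sem_one']
      apply Set.union_eq_self_of_subset_left
      apply Set.union_subset
      · intro w hw
        rcases hw with rfl
        exact AddSubmonoid.zero_mem _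
      · rintro w ⟨u, hu, v, hv, rfl⟩
        exact AddSubmonoid.add_mem _ (AddSubmonoid.subset_closure hu) hv
  | @star_lfp e f h ih =>
      rw [sem_union', sem_mul', sem_star'']
      rw [sem_union', sem_mul'] at ih
      have key : ∀ x ∈ AddSubmonoid.closure (sem e), ∀ y ∈ sem f, x + y ∈ sem f := by
        intro x hx
        induction hx using AddSubmonoid.closure_induction with
        | mem z hz =>
            intro y hy
            have : z + y ∈ (sem e + sem f) ∪ sem f := Or.inl ⟨z, hz, y, hy, rfl⟩
            rwa [ih] at this
        | zero => intro y hy; simpa using hy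
        | add a b _ _ iha ihb =>
            intro y hy
            rw [add_assoc]
            exact iha _ (ihb y hy)
      apply Set.union_eq_self_of_subset_left
      rintro w ⟨u, hu, v, hv, rfl⟩
      exact key u hu v hv

theorem sem_pow_letter (a : α) (n : ℕ) : sem (pow (CRE.letter a) n) = {Pi.single a n} := by
  induction n with
  | zero => show sem CRE.one = _; rw [sem_one']; simp [Set.singleton_zero]
  | succ n ih =>
    show sem ((CRE.letter a).mul _) = _
    rw [sem_mul', ih]
    show ({Pi.single a 1} : Set (α → ℕ)) + {Pi.single a n} = _
    rw [Set.singleton_add_singleton, ← Pi.single_add]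
    norm_num [add_comm]

theorem sem_prodList {l : List (CRE α)} {vs : List (α → ℕ)}
    (h : List.Forall₂ (fun e v => sem e = {v}) l vs) : sem (prodList l) = {vs.sum} := by
  induction h with
  | nil => simp [prodList, sem_one', Set.singleton_zero]
  | @cons e v l vs he _ ih =>
    show sem (e.mul _) = _
    rw [sem_mul', he, ih, Set.singleton_add_singleton, List.sum_cons]

theorem sem_exprVec (u : α → ℕ) : sem (exprVec u) = {u} := by
  unfold exprVec
  have h : List.Forall₂ (fun e v => sem e = {v})
      (Finset.univ.toList.map (fun a => pow (CRE.letter a) (u a)))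
      (Finset.univ.toList.map (fun a => Pi.single a (u a))) := by
    rw [List.forall₂_map_left_iff, List.forall₂_map_right_iff]
    exact List.forall₂_same.2 fun a _ => sem_pow_letter a (u a)
  rw [sem_prodList h]
  have : (Finset.univ.toList.map (fun a => Pi.single a (u a))).sum
      = ∑ a ∈ Finset.univ, Pi.single a (u a) := Finset.sum_map_toList _ _
  rw [this, Finset.univ_sum_single]

theorem sem_unionList (l : List (CRE α)) : sem (unionList l) = ⋃ e ∈ l, sem e := by
  induction l with
  | nil => simp [unionList]; rfl
  | cons a l ih =>
    show sem a ∪ sem (unionList l) = _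
    rw [ih]; simp

theorem sem_unionVecs (B : Finset (α → ℕ)) : sem (unionVecs B) = (B : Set (α → ℕ)) := by
  unfold unionVecs
  rw [sem_unionList]
  ext v
  simp only [Set.mem_iUnion, List.mem_map, Finset.mem_coe]
  constructor
  · rintro ⟨e, ⟨⟨b, hb, rfl⟩, hv⟩⟩
    rw [sem_exprVec] at hv
    rcases hv with rfl
    exact Finset.mem_toList.1 hb
  · intro hv
    exact ⟨exprVec v, ⟨⟨v, Finset.mem_toList.2 hv, rfl⟩, by rw [sem_exprVec]; rfl⟩⟩

theorem sem_star' (e : CRE α) : sem e.star = (AddSubmonoid.closure (sem e) : Set (α → ℕ)) := rfl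

theorem sem_linExpr (u : α → ℕ) (B : Finset (α → ℕ)) :
    sem (linExpr u B) = {w | ∃ m ∈ AddSubmonoid.closure (B : Set (α → ℕ)), w = u + m} := by
  unfold linExpr
  rw [sem_mul', sem_exprVec, sem_star', sem_unionVecs]
  ext w
  simp only [Set.mem_add, Set.mem_singleton_iff, Set.mem_setOf_eq, SetLike.mem_coe]
  constructor
  · rintro ⟨x, rfl, y, hy, rfl⟩; exact ⟨y, hy, rfl⟩
  · rintro ⟨m, hm, rfl⟩; exact ⟨u, rfl, m, hm, rfl⟩

theorem sem_semiLin (M : List ((α → ℕ) × Finset (α → ℕ))) :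
    sem (semiLin M) = ⋃ p ∈ M, sem (linExpr p.1 p.2) := by
  unfold semiLin
  rw [sem_unionList]
  ext w
  simp only [Set.mem_iUnion, List.mem_map]
  constructor
  · rintro ⟨e, ⟨⟨p, hp, rfl⟩, hw⟩⟩; exact ⟨p, hp, hw⟩
  · rintro ⟨p, hp, hw⟩; exact ⟨linExpr p.1 p.2, ⟨⟨p, hp, rfl⟩, hw⟩⟩

end Semantics

/-! ### Dickson / Gordan: finite generation of solution monoids -/

section Gordan
set_option linter.unusedSectionVars false

variable {ι : Type} [Fintype ι]

/-- Minimal elements of a set of tuples of naturals. -/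
def minimalsSet (s : Set (ι → ℕ)) : Set (ι → ℕ) := {x | x ∈ s ∧ ∀ y ∈ s, y ≤ x → y = x}

theorem minimalsSet_finite (s : Set (ι → ℕ)) : (minimalsSet s).Finite := by
  haveI : IsWellOrder ℕ (· < ·) := inferInstance
  by_contra hinf
  have h : (minimalsSet s).Infinite := hinf
  let f := h.natEmbedding
  obtain ⟨m, n, hmn, hle⟩ := wellQuasiOrdered_le (α := ι → ℕ)
    (fun k => (f k : ι → ℕ))
  have heq : (f m : ι → ℕ) = f n := (f n).2.2 _ (f m).2.1 hle
  exact absurd (f.injective (Subtype.ext heq)) (Nat.ne_of_lt hmn)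

theorem exists_minimalsSet_le {s : Set (ι → ℕ)} {x : ι → ℕ} (hx : x ∈ s) :
    ∃ m ∈ minimalsSet s, m ≤ x := by
  obtain ⟨N, hN⟩ : ∃ N, ∑ i, x i ≤ N := ⟨_, le_refl _⟩
  induction N generalizing x with
  | zero =>
    refine ⟨x, ⟨hx, fun y hy hyx => ?_⟩, le_refl x⟩
    have hx0 : ∀ i, x i = 0 := fun i =>
      Finset.sum_eq_zero_iff.1 (Nat.le_zero.1 hN) i (Finset.mem_univ i)
    funext i
    have h1 : y i ≤ x i := hyx i
    have h2 := hx0 i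
    omega
  | succ N ih =>
    by_cases hmin : ∀ y ∈ s, y ≤ x → y = x
    · exact ⟨x, ⟨hx, hmin⟩, le_refl x⟩
    · push_neg at hmin
      obtain ⟨y, hy, hyx, hne⟩ := hmin
      obtain ⟨i0, hi0⟩ := Function.ne_iff.1 hne
      have hlt : ∑ i, y i < ∑ i, x i := by
        apply Finset.sum_lt_sum (fun i _ => hyx i)
        exact ⟨i0, Finset.mem_univ i0, lt_of_le_of_ne (hyx i0) hi0⟩
      obtain ⟨m, hm, hmy⟩ := ih hy (by omega)
      exact ⟨m, hm, le_trans hmy hyx⟩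

theorem saturated_fg (P : AddSubmonoid (ι → ℕ))
    (hP : ∀ x ∈ P, ∀ y ∈ P, y ≤ x → x - y ∈ P) :
    ∃ G : Finset (ι → ℕ), AddSubmonoid.closure (G : Set (ι → ℕ)) = P := by
  classical
  set s : Set (ι → ℕ) := {x | x ∈ P ∧ x ≠ 0} with hs
  have hfin := minimalsSet_finite s
  refine ⟨hfin.toFinset, le_antisymm ?_ ?_⟩
  · rw [AddSubmonoid.closure_le]
    intro g hg
    rw [Set.Finite.coe_toFinset] at hg
    exact hg.1.1
  · intro x hx
    obtain ⟨N, hN⟩ : ∃ N, ∑ i, x i ≤ N := ⟨_, le_refl _⟩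
    induction N generalizing x with
    | zero =>
      have hx0 : x = 0 := by
        funext i
        exact Finset.sum_eq_zero_iff.1 (Nat.le_zero.1 hN) i (Finset.mem_univ i)
      rw [hx0]; exact zero_mem _
    | succ N ih =>
      by_cases hx0 : x = 0
      · rw [hx0]; exact zero_mem _
      · have hxs : x ∈ s := ⟨hx, hx0⟩
        obtain ⟨m, hm, hmx⟩ := exists_minimalsSet_le hxs
        have hmgen : m ∈ AddSubmonoid.closure (hfin.toFinset : Set (ι → ℕ)) := by
          apply AddSubmonoid.subset_closure
          rw [Set.Finite.coe_toFinset]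
          exact hm
        have hsub : x - m ∈ P := hP x hx m hm.1.1 hmx
        have hxm : (x - m) + m = x := by
          funext i
          have h1 : m i ≤ x i := hmx i
          show x i - m i + m i = x i
          omega
        have hsum : ∑ i, (x - m) i + ∑ i, m i = ∑ i, x i := by
          rw [← Finset.sum_add_distrib]
          have : ∀ i, (x - m) i + m i = x i := fun i => congrFun hxm i
          exact Finset.sum_congr rfl (fun i _ => this i)
        have hmpos : 0 < ∑ i, m i := by
          rcases Function.ne_iff.1 hm.1.2 with ⟨i, hi⟩
          have : 0 < m i := by
            have : m i ≠ 0 := fun h => hi (by simpa using h)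
            omega
          exact lt_of_lt_of_le this (Finset.single_le_sum (fun j _ => Nat.zero_le (m j))
            (Finset.mem_univ i))
        have hrec : x - m ∈ AddSubmonoid.closure (hfin.toFinset : Set (ι → ℕ)) :=
          ih hsub (by omega)
        rw [← hxm]
        exact add_mem hrec hmgen

theorem mem_closure_iff_coeff {M : Type*} [AddCommMonoid M] [DecidableEq M]
    {G : Finset M} {x : M} :
    x ∈ AddSubmonoid.closure (G : Set M) ↔ ∃ c : M → ℕ, x = ∑ g ∈ G, c g • g := by
  constructor
  · intro hx
    induction hx using AddSubmonoid.closure_induction with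
    | mem g hg =>
      refine ⟨fun h => if h = g then 1 else 0, ?_⟩
      have : ∀ h ∈ G, (if h = g then (1:ℕ) else 0) • h = if h = g then h else 0 := by
        intro h _
        by_cases hh : h = g <;> simp [hh]
      rw [Finset.sum_congr rfl this, Finset.sum_ite_eq' G g (fun h => h),
        if_pos (Finset.mem_coe.1 hg)]
    | zero => exact ⟨0, by simp⟩
    | add a b _ _ iha ihb =>
      obtain ⟨c, rfl⟩ := iha
      obtain ⟨d, rfl⟩ := ihb
      exact ⟨c + d, by simp [add_smul, Finset.sum_add_distrib]⟩
  · rintro ⟨c, rfl⟩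
    exact AddSubmonoid.sum_mem _ fun g hg =>
      nsmul_mem (AddSubmonoid.subset_closure (Finset.mem_coe.2 hg)) (c g)

end Gordan

/-! ### Intersections of finitely generated submonoids of `ℕ^α` -/

section InterSect
set_option linter.unusedSectionVars false

variable (G C : Finset (α → ℕ))

/-- Coefficient evaluation on the `G`-part. -/
def phiG (p : ({x // x ∈ G} ⊕ {x // x ∈ C}) → ℕ) : α → ℕ :=
  ∑ g : {x // x ∈ G}, p (Sum.inl g) • (g : α → ℕ)

/-- Coefficient evaluation on the `C`-part. -/
def phiC (p : ({x // x ∈ G} ⊕ {x // x ∈ C}) → ℕ) : α → ℕ :=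
  ∑ c : {x // x ∈ C}, p (Sum.inr c) • (c : α → ℕ)

theorem phiG_add (p q : ({x // x ∈ G} ⊕ {x // x ∈ C}) → ℕ) :
    phiG G C (p + q) = phiG G C p + phiG G C q := by
  unfold phiG
  rw [← Finset.sum_add_distrib]
  refine Finset.sum_congr rfl fun g _ => ?_
  show (p (Sum.inl g) + q (Sum.inl g)) • (g : α → ℕ) = _
  rw [add_smul]

theorem phiC_add (p q : ({x // x ∈ G} ⊕ {x // x ∈ C}) → ℕ) :
    phiC G C (p + q) = phiC G C p + phiC G C q := by
  unfold phiC
  rw [← Finset.sum_add_distrib]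
  refine Finset.sum_congr rfl fun c _ => ?_
  show (p (Sum.inr c) + q (Sum.inr c)) • (c : α → ℕ) = _
  rw [add_smul]

theorem phiG_zero : phiG G C 0 = 0 := by
  unfold phiG; simp

theorem phiC_zero : phiC G C 0 = 0 := by
  unfold phiC; simp

theorem phiG_mem (p : ({x // x ∈ G} ⊕ {x // x ∈ C}) → ℕ) :
    phiG G C p ∈ AddSubmonoid.closure (G : Set (α → ℕ)) :=
  AddSubmonoid.sum_mem _ fun g _ =>
    nsmul_mem (AddSubmonoid.subset_closure (Finset.mem_coe.2 g.2)) _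

theorem phiC_mem (p : ({x // x ∈ G} ⊕ {x // x ∈ C}) → ℕ) :
    phiC G C p ∈ AddSubmonoid.closure (C : Set (α → ℕ)) :=
  AddSubmonoid.sum_mem _ fun c _ =>
    nsmul_mem (AddSubmonoid.subset_closure (Finset.mem_coe.2 c.2)) _

theorem sub_add_cancel_pi {ι : Type} {p q : ι → ℕ} (h : q ≤ p) : (p - q) + q = p := by
  funext i
  have : q i ≤ p i := h i
  show p i - q i + q i = p i
  omega

theorem phiG_sub {p q : ({x // x ∈ G} ⊕ {x // x ∈ C}) → ℕ} (h : q ≤ p) :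
    phiG G C (p - q) + phiG G C q = phiG G C p := by
  rw [← phiG_add, sub_add_cancel_pi h]

theorem phiC_sub {p q : ({x // x ∈ G} ⊕ {x // x ∈ C}) → ℕ} (h : q ≤ p) :
    phiC G C (p - q) + phiC G C q = phiC G C p := by
  rw [← phiC_add, sub_add_cancel_pi h]

/-- Realize a member of the closure as a `phiG`-value. -/
theorem exists_phiG (m : α → ℕ) (hm : m ∈ AddSubmonoid.closure (G : Set (α → ℕ)))
    (m' : α → ℕ) (hm' : m' ∈ AddSubmonoid.closure (C : Set (α → ℕ))) :
    ∃ p : ({x // x ∈ G} ⊕ {x // x ∈ C}) → ℕ, phiG G C p = m ∧ phiC G C p = m' := by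
  classical
  obtain ⟨c, rfl⟩ := mem_closure_iff_coeff.1 hm
  obtain ⟨d, rfl⟩ := mem_closure_iff_coeff.1 hm'
  refine ⟨Sum.elim (fun g => c g.1) (fun x => d x.1), ?_, ?_⟩
  · unfold phiG
    simp only [Sum.elim_inl]
    exact Finset.sum_coe_sort G (fun g => c g • g)
  · unfold phiC
    simp only [Sum.elim_inr]
    exact Finset.sum_coe_sort C (fun x => d x • x)

/-- The intersection of two finitely generated submonoids of `ℕ^α` is finitely generated. -/
theorem inter_fg : ∃ D : Finset (α → ℕ),
    AddSubmonoid.closure (D : Set (α → ℕ)) =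
      AddSubmonoid.closure (G : Set (α → ℕ)) ⊓ AddSubmonoid.closure (C : Set (α → ℕ)) := by
  classical
  set Sol : AddSubmonoid (({x // x ∈ G} ⊕ {x // x ∈ C}) → ℕ) :=
    { carrier := {p | phiG G C p = phiC G C p}
      zero_mem' := by simp [Set.mem_setOf_eq, phiG_zero, phiC_zero]
      add_mem' := by
        intro p q hp hq
        show phiG G C (p + q) = phiC G C (p + q)
        rw [phiG_add, phiC_add]
        exact congrArg₂ (· + ·) hp hq } with hSol
  have hsat : ∀ p ∈ Sol, ∀ q ∈ Sol, q ≤ p → p - q ∈ Sol := by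
    intro p hp q hq hle
    show phiG G C (p - q) = phiC G C (p - q)
    have h1 : phiG G C (p - q) + phiG G C q = phiC G C (p - q) + phiC G C q := by
      rw [phiG_sub G C hle, phiC_sub G C hle]
      exact hp
    rw [← hq] at h1
    exact add_right_cancel h1
  obtain ⟨Gen, hGen⟩ := saturated_fg Sol hsat
  refine ⟨Gen.image (fun p => phiG G C p), le_antisymm ?_ ?_⟩
  · rw [AddSubmonoid.closure_le]
    intro y hy
    rcases Finset.mem_coe.1 hy with hy'
    rcases Finset.mem_image.1 hy' with ⟨p, hp, rfl⟩
    have hps : p ∈ Sol := by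
      rw [← hGen]; exact AddSubmonoid.subset_closure (Finset.mem_coe.2 hp)
    exact AddSubmonoid.mem_inf.2 ⟨phiG_mem G C p, by
      show phiG G C p ∈ _
      rw [show phiG G C p = phiC G C p from hps]
      exact phiC_mem G C p⟩
  · intro y hy
    rcases AddSubmonoid.mem_inf.1 hy with ⟨hyG, hyC⟩
    obtain ⟨p, hpG, hpC⟩ := exists_phiG G C y hyG y hyC
    have hps : p ∈ Sol := by
      show phiG G C p = phiC G C p
      rw [hpG, hpC]
    have hpcl : p ∈ AddSubmonoid.closure (Gen : Set _) := by rw [hGen]; exact hps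
    have main : ∀ q ∈ AddSubmonoid.closure (Gen : Set _),
        phiG G C q ∈ AddSubmonoid.closure ((Gen.image (fun p => phiG G C p)) : Set (α → ℕ)) := by
      intro q hq
      induction hq using AddSubmonoid.closure_induction with
      | mem r hr =>
        exact AddSubmonoid.subset_closure
          (Finset.mem_coe.2 (Finset.mem_image.2 ⟨r, Finset.mem_coe.1 hr, rfl⟩))
      | zero => rw [phiG_zero]; exact zero_mem _
      | add a b _ _ iha ihb => rw [phiG_add]; exact add_mem iha ihb
    rw [← hpG]
    exact main p hpcl

/-- Decomposition of the intersection of two translated f.g. submonoids. -/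
theorem lin_decomp (x v : α → ℕ) : ∃ Bs : Finset (α → ℕ),
    (∀ b ∈ Bs, (∃ m ∈ AddSubmonoid.closure (G : Set (α → ℕ)), b = x + m) ∧
      (∃ m ∈ AddSubmonoid.closure (C : Set (α → ℕ)), b = v + m)) ∧
    ∀ y, (∃ m ∈ AddSubmonoid.closure (G : Set (α → ℕ)), y = x + m) →
      (∃ m ∈ AddSubmonoid.closure (C : Set (α → ℕ)), y = v + m) →
      ∃ b ∈ Bs, ∃ m, (m ∈ AddSubmonoid.closure (G : Set (α → ℕ)) ∧
        m ∈ AddSubmonoid.closure (C : Set (α → ℕ))) ∧ y = b + m := by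
  classical
  set SolS : Set (({x // x ∈ G} ⊕ {x // x ∈ C}) → ℕ) :=
    {p | x + phiG G C p = v + phiC G C p} with hSolS
  have hfin := minimalsSet_finite SolS
  refine ⟨hfin.toFinset.image (fun p => x + phiG G C p), ?_, ?_⟩
  · intro b hb
    rcases Finset.mem_image.1 hb with ⟨p, hp, rfl⟩
    have hps : p ∈ SolS := ((Set.Finite.mem_toFinset hfin).1 hp).1
    exact ⟨⟨phiG G C p, phiG_mem G C p, rfl⟩, ⟨phiC G C p, phiC_mem G C p, hps⟩⟩
  · rintro y ⟨m, hm, rfl⟩ ⟨m', hm', hy'⟩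
    obtain ⟨p, hpG, hpC⟩ := exists_phiG G C m hm m' hm'
    have hpS : p ∈ SolS := by
      show x + phiG G C p = v + phiC G C p
      rw [hpG, hpC]
      exact hy'
    obtain ⟨q, hqmin, hqle⟩ := exists_minimalsSet_le hpS
    have hqS : q ∈ SolS := hqmin.1
    have hhom : phiG G C (p - q) = phiC G C (p - q) := by
      have h1 : (x + phiG G C q) + phiG G C (p - q) = (v + phiC G C q) + phiC G C (p - q) := by
        rw [add_assoc, add_assoc, add_comm (phiG G C q), add_comm (phiC G C q)]
        rw [phiG_sub G C hqle, phiC_sub G C hqle]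
        exact hpS
      rw [hqS] at h1
      exact add_left_cancel h1
    refine ⟨x + phiG G C q,
      Finset.mem_image.2 ⟨q, (Set.Finite.mem_toFinset hfin).2 hqmin, rfl⟩,
      phiG G C (p - q), ⟨phiG_mem G C _, by rw [hhom]; exact phiC_mem G C _⟩, ?_⟩
    rw [← hpG, ← phiG_sub G C hqle]
    rw [add_comm (phiG G C (p - q)), ← add_assoc]

end InterSect

/-! ### The covering lemma -/

section Cover
set_option linter.unusedSectionVars false
set_option maxHeartbeats 1000000

local infixl:70 " ⬝ " => CRE.mul
local infix:50 " ≈ " => CKA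
local infix:50 " ≼ " => leq

open CKA

/-- The set of Parikh vectors of a linear component. -/
def compSet (p : (α → ℕ) × Finset (α → ℕ)) : Set (α → ℕ) :=
  {y | ∃ m ∈ AddSubmonoid.closure (p.2 : Set (α → ℕ)), y = p.1 + m}

variable (B : Finset (α → ℕ)) (M : List ((α → ℕ) × Finset (α → ℕ)))

/-- The monoid of periods common to `B` and the components in `S`. -/
def Mon (S : Finset ((α → ℕ) × Finset (α → ℕ))) : AddSubmonoid (α → ℕ) :=
  AddSubmonoid.closure (B : Set (α → ℕ)) ⊓
    S.inf (fun p => AddSubmonoid.closure (p.2 : Set (α → ℕ)))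

theorem Mon_insert (p : (α → ℕ) × Finset (α → ℕ)) (S : Finset ((α → ℕ) × Finset (α → ℕ))) :
    Mon B (insert p S) = Mon B S ⊓ AddSubmonoid.closure (p.2 : Set (α → ℕ)) := by
  classical
  unfold Mon
  rw [Finset.inf_insert]
  apply _root_.le_antisymm
  · exact le_inf (le_inf inf_le_left (le_trans inf_le_right inf_le_right))
      (le_trans inf_le_right inf_le_left)
  · exact le_inf (le_trans inf_le_left inf_le_left)
      (le_inf inf_le_right (le_trans inf_le_left inf_le_right))

theorem Mon_anti {S₁ S₂ : Finset ((α → ℕ) × Finset (α → ℕ))} (h : S₁ ⊆ S₂) :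
    Mon B S₂ ≤ Mon B S₁ :=
  inf_le_inf_left _ (Finset.inf_mono h)

theorem Mon_le_mem {p : (α → ℕ) × Finset (α → ℕ)} {S : Finset ((α → ℕ) × Finset (α → ℕ))}
    (hp : p ∈ S) : Mon B S ≤ AddSubmonoid.closure (p.2 : Set (α → ℕ)) :=
  le_trans inf_le_right (Finset.inf_le hp)

theorem Mon_fg (S : Finset ((α → ℕ) × Finset (α → ℕ))) :
    ∃ D : Finset (α → ℕ), AddSubmonoid.closure (D : Set (α → ℕ)) = Mon B S := by
  classical
  induction S using Finset.induction_on with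
  | empty => exact ⟨B, by rw [Mon, Finset.inf_empty, inf_top_eq]⟩
  | @insert a S _ ih =>
    obtain ⟨D, hD⟩ := ih
    obtain ⟨D', hD'⟩ := inter_fg D a.2
    exact ⟨D', by rw [hD', hD, Mon_insert]⟩

/-- A chosen finite generating set for `Mon B S`. -/
noncomputable def GS (S : Finset ((α → ℕ) × Finset (α → ℕ))) : Finset (α → ℕ) :=
  (Mon_fg B S).choose

theorem GS_spec (S : Finset ((α → ℕ) × Finset (α → ℕ))) :
    AddSubmonoid.closure ((GS B S : Finset (α → ℕ)) : Set (α → ℕ)) = Mon B S :=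
  (Mon_fg B S).choose_spec

/-- Chosen base points for the decomposition of `(x + Mon B S) ∩ compSet p`. -/
noncomputable def Bases (x : α → ℕ) (S : Finset ((α → ℕ) × Finset (α → ℕ)))
    (p : (α → ℕ) × Finset (α → ℕ)) : Finset (α → ℕ) :=
  (lin_decomp (GS B S) p.2 x p.1).choose

theorem Bases_spec₁ (x : α → ℕ) (S : Finset ((α → ℕ) × Finset (α → ℕ)))
    (p : (α → ℕ) × Finset (α → ℕ)) :
    ∀ b ∈ Bases B x S p,
      (∃ m ∈ AddSubmonoid.closure ((GS B S : Finset (α → ℕ)) : Set (α → ℕ)), b = x + m) ∧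
      (∃ m ∈ AddSubmonoid.closure (p.2 : Set (α → ℕ)), b = p.1 + m) :=
  (lin_decomp (GS B S) p.2 x p.1).choose_spec.1

theorem Bases_spec₂ (x : α → ℕ) (S : Finset ((α → ℕ) × Finset (α → ℕ)))
    (p : (α → ℕ) × Finset (α → ℕ)) :
    ∀ y, (∃ m ∈ AddSubmonoid.closure ((GS B S : Finset (α → ℕ)) : Set (α → ℕ)), y = x + m) →
      (∃ m ∈ AddSubmonoid.closure (p.2 : Set (α → ℕ)), y = p.1 + m) →
      ∃ b ∈ Bases B x S p, ∃ m,
        (m ∈ AddSubmonoid.closure ((GS B S : Finset (α → ℕ)) : Set (α → ℕ)) ∧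
          m ∈ AddSubmonoid.closure (p.2 : Set (α → ℕ))) ∧ y = b + m :=
  (lin_decomp (GS B S) p.2 x p.1).choose_spec.2

/-- The refined union of linear expressions used in the covering lemma. -/
noncomputable def FF (x : α → ℕ) (S : Finset ((α → ℕ) × Finset (α → ℕ))) : CRE α :=
  unionList (M.flatMap fun p => (Bases B x S p).toList.map fun b => linExpr b (GS B (insert p S)))

theorem mem_FF {x : α → ℕ} {S : Finset ((α → ℕ) × Finset (α → ℕ))}
    {p : (α → ℕ) × Finset (α → ℕ)} {b : α → ℕ} (hp : p ∈ M) (hb : b ∈ Bases B x S p) :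
    linExpr b (GS B (insert p S)) ≼ FF B M x S :=
  le_unionList (List.mem_flatMap.2 ⟨p, hp, List.mem_map.2 ⟨b, Finset.mem_toList.2 hb, rfl⟩⟩)

theorem FF_le {x : α → ℕ} {S : Finset ((α → ℕ) × Finset (α → ℕ))} {g : CRE α}
    (h : ∀ p ∈ M, ∀ b ∈ Bases B x S p, linExpr b (GS B (insert p S)) ≼ g) :
    FF B M x S ≼ g := by
  apply unionList_le
  intro e he
  rcases List.mem_flatMap.1 he with ⟨p, hp, he'⟩
  rcases List.mem_map.1 he' with ⟨b, hb, rfl⟩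
  exact h p hp b (Finset.mem_toList.1 hb)

theorem linExpr_le_linExpr {b b' m : α → ℕ} {D D' : Finset (α → ℕ)}
    (hm : m ∈ AddSubmonoid.closure (D' : Set (α → ℕ))) (hb : b = b' + m)
    (hDD : ∀ v ∈ D, v ∈ AddSubmonoid.closure (D' : Set (α → ℕ))) :
    linExpr b D ≼ linExpr b' D' := by
  unfold linExpr
  calc exprVec b ⬝ (unionVecs D).star
      ≈ (exprVec b' ⬝ exprVec m) ⬝ (unionVecs D).star := by
        rw [hb]; exact CKA.mul_congr (exprVec_add b' m) rfl'
    _ ≈ exprVec b' ⬝ (exprVec m ⬝ (unionVecs D).star) := (CKA.mul_assoc _ _ _).symm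
    _ ≼ exprVec b' ⬝ ((unionVecs D').star ⬝ (unionVecs D').star) :=
        mul_le_mul (le_refl _) (mul_le_mul (mem_closure_le_star hm) (star_le_star_closure hDD))
    _ ≈ exprVec b' ⬝ (unionVecs D').star := CKA.mul_congr rfl' (star_mul_star _)

theorem cover_lemma : ∀ (k : ℕ) (S : Finset ((α → ℕ) × Finset (α → ℕ))),
    S ⊆ M.toFinset → (M.toFinset \ S).card ≤ k →
    ∀ x : α → ℕ, (∀ m ∈ Mon B S, ∃ p ∈ M, x + m ∈ compSet p) →
    linExpr x (GS B S) ≼ FF B M x S := by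
  classical
  intro k
  induction k using Nat.strong_induction_on with
  | _ k ih =>
  intro S hS hk x hcov
  have hD : AddSubmonoid.closure ((GS B S : Finset (α → ℕ)) : Set (α → ℕ)) = Mon B S :=
    GS_spec B S
  -- Step 1: absorption of single generators into terms of FF
  have habs : ∀ g ∈ GS B S, ∀ p ∈ M, ∀ b ∈ Bases B x S p,
      exprVec g ⬝ linExpr b (GS B (insert p S)) ≼ FF B M x S := by
    intro g hg p hp b hb
    have hgMon : g ∈ Mon B S := by
      rw [← hD]; exact AddSubmonoid.subset_closure (Finset.mem_coe.2 hg)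
    obtain ⟨⟨m₀, hm₀, hbx⟩, hbcomp⟩ := Bases_spec₁ B x S p b hb
    have hm₀Mon : m₀ ∈ Mon B S := by rw [← hD]; exact hm₀
    by_cases hgp : g ∈ AddSubmonoid.closure (p.2 : Set (α → ℕ))
    · -- the generator is absorbed by the cycle part of this term
      have hgT : g ∈ AddSubmonoid.closure
          ((GS B (insert p S) : Finset (α → ℕ)) : Set (α → ℕ)) := by
        rw [GS_spec, Mon_insert]
        exact ⟨hgMon, hgp⟩
      unfold linExpr
      calc exprVec g ⬝ (exprVec b ⬝ (unionVecs (GS B (insert p S))).star)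
          ≈ exprVec b ⬝ (exprVec g ⬝ (unionVecs (GS B (insert p S))).star) :=
            mul_left_comm' _ _ _
        _ ≼ exprVec b ⬝ ((unionVecs (GS B (insert p S))).star ⬝
              (unionVecs (GS B (insert p S))).star) :=
            mul_le_mul (le_refl _) (mul_le_mul (mem_closure_le_star hgT) (le_refl _))
        _ ≈ exprVec b ⬝ (unionVecs (GS B (insert p S))).star :=
            CKA.mul_congr rfl' (star_mul_star _)
        _ ≼ FF B M x S := mem_FF B M hp hb
    · -- recurse with a larger S
      have hpS : p ∉ S := fun hpS => hgp (Mon_le_mem B hpS hgMon)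
      have hpMT : p ∈ M.toFinset := List.mem_toFinset.2 hp
      have hTsub : insert p S ⊆ M.toFinset := Finset.insert_subset hpMT hS
      have hcard : (M.toFinset \ insert p S).card < (M.toFinset \ S).card := by
        apply Finset.card_lt_card
        constructor
        · exact Finset.sdiff_subset_sdiff (le_refl _) (Finset.subset_insert p S)
        · intro hsub
          have h1 : p ∈ M.toFinset \ S := Finset.mem_sdiff.2 ⟨hpMT, hpS⟩
          have h2 := hsub h1
          rw [Finset.mem_sdiff] at h2
          exact h2.2 (Finset.mem_insert_self p S)
      have hcovT : ∀ m ∈ Mon B (insert p S), ∃ p' ∈ M, (b + g) + m ∈ compSet p' := by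
        intro m hm
        have hmm : m₀ + (g + m) ∈ Mon B S :=
          add_mem hm₀Mon (add_mem hgMon (Mon_anti B (Finset.subset_insert p S) hm))
        obtain ⟨p', hp', hmem⟩ := hcov _ hmm
        refine ⟨p', hp', ?_⟩
        have : (b + g) + m = x + (m₀ + (g + m)) := by rw [hbx]; abel
        rw [this]
        exact hmem
      have hIH := ih (M.toFinset \ insert p S).card (lt_of_lt_of_le hcard hk)
        (insert p S) hTsub (le_refl _) (b + g) hcovT
      have hFT : FF B M (b + g) (insert p S) ≼ FF B M x S := by
        apply FF_le
        intro p'' hp'' b'' hb''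
        obtain ⟨⟨m'', hm'', hb''eq⟩, hb''comp⟩ := Bases_spec₁ B (b + g) (insert p S) p'' b'' hb''
        have hm''Mon : m'' ∈ Mon B S := by
          have : m'' ∈ Mon B (insert p S) := by rw [← GS_spec]; exact hm''
          exact Mon_anti B (Finset.subset_insert p S) this
        have hyG : ∃ mm ∈ AddSubmonoid.closure ((GS B S : Finset (α → ℕ)) : Set (α → ℕ)),
            b'' = x + mm := by
          refine ⟨m₀ + (g + m''), by rw [hD]; exact add_mem hm₀Mon (add_mem hgMon hm''Mon), ?_⟩
          rw [hb''eq, hbx]; abel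
        obtain ⟨bt, hbt, mm, ⟨hmmG, hmmP⟩, hyeq⟩ := Bases_spec₂ B x S p'' b'' hyG hb''comp
        have hterm : linExpr b'' (GS B (insert p'' (insert p S))) ≼
            linExpr bt (GS B (insert p'' S)) := by
          apply linExpr_le_linExpr (m := mm)
          · rw [GS_spec, Mon_insert]
            refine ⟨by rw [← hD]; exact hmmG, hmmP⟩
          · exact hyeq
          · intro v hv
            rw [GS_spec, Mon_insert]
            have hvT : v ∈ Mon B (insert p'' (insert p S)) := by
              rw [← GS_spec]; exact AddSubmonoid.subset_closure (Finset.mem_coe.2 hv)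
            rw [Mon_insert] at hvT
            exact ⟨Mon_anti B (Finset.subset_insert p S) hvT.1, hvT.2⟩
        exact le_trans hterm (mem_FF B M hp'' hbt)
      calc exprVec g ⬝ linExpr b (GS B (insert p S))
          ≈ linExpr (b + g) (GS B (insert p S)) := by
            unfold linExpr
            calc exprVec g ⬝ (exprVec b ⬝ (unionVecs (GS B (insert p S))).star)
                ≈ (exprVec g ⬝ exprVec b) ⬝ (unionVecs (GS B (insert p S))).star :=
                  CKA.mul_assoc _ _ _
              _ ≈ exprVec (b + g) ⬝ (unionVecs (GS B (insert p S))).star :=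
                  CKA.mul_congr ((CKA.mul_comm _ _).trans (exprVec_add b g).symm) rfl'
        _ ≼ FF B M (b + g) (insert p S) := hIH
        _ ≼ FF B M x S := hFT
  -- Step 2: the base point is in FF
  have hbase : exprVec x ≼ FF B M x S := by
    obtain ⟨p, hp, hxp⟩ := hcov 0 (zero_mem _)
    rw [add_zero] at hxp
    obtain ⟨bt, hbt, mm, ⟨hmmG, hmmP⟩, hyeq⟩ := Bases_spec₂ B x S p x
      ⟨0, zero_mem _, (add_zero x).symm⟩ hxp
    have hmmT : mm ∈ AddSubmonoid.closure
        ((GS B (insert p S) : Finset (α → ℕ)) : Set (α → ℕ)) := by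
      rw [GS_spec, Mon_insert]
      exact ⟨by rw [← hD]; exact hmmG, hmmP⟩
    calc exprVec x ≈ exprVec bt ⬝ exprVec mm := by rw [hyeq]; exact exprVec_add _ _
      _ ≼ exprVec bt ⬝ (unionVecs (GS B (insert p S))).star :=
          mul_le_mul (le_refl _) (mem_closure_le_star hmmT)
      _ ≼ FF B M x S := mem_FF B M hp hbt
  -- Step 3: close up under the star
  have hmulabs : unionVecs (GS B S) ⬝ FF B M x S ≼ FF B M x S := by
    have h1 : unionVecs (GS B S) ⬝ FF B M x S ≈
        unionList (((GS B S).toList.map exprVec).map (fun e => e ⬝ FF B M x S)) :=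
      unionList_mul _ _
    refine le_trans (le_of_eq h1) (unionList_le ?_)
    intro e he
    rcases List.mem_map.1 he with ⟨e', he', rfl⟩
    rcases List.mem_map.1 he' with ⟨g, hg, rfl⟩
    have hgD : g ∈ GS B S := Finset.mem_toList.1 hg
    unfold FF
    refine le_trans (le_of_eq (mul_unionList _ _)) (unionList_le ?_)
    intro e'' he''
    rcases List.mem_map.1 he'' with ⟨t, ht, rfl⟩
    rcases List.mem_flatMap.1 ht with ⟨p, hp, ht'⟩
    rcases List.mem_map.1 ht' with ⟨b, hb, rfl⟩
    exact habs g hgD p hp b (Finset.mem_toList.1 hb)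
  have hstarabs : (unionVecs (GS B S)).star ⬝ FF B M x S ≼ FF B M x S := star_absorb hmulabs
  unfold linExpr
  calc exprVec x ⬝ (unionVecs (GS B S)).star
      ≼ FF B M x S ⬝ (unionVecs (GS B S)).star := mul_le_mul hbase (le_refl _)
    _ ≈ (unionVecs (GS B S)).star ⬝ FF B M x S := CKA.mul_comm _ _
    _ ≼ FF B M x S := hstarabs

end Cover

/-! ### Normal form: every expression is provably a semilinear expression -/

section NormalForm
set_option linter.unusedSectionVars false
set_option maxHeartbeats 1000000

local infixl:70 " ⬝ " => CRE.mul
local infixl:65 " ⋓ " => CRE.union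
local infix:50 " ≈ " => CKA
local infix:50 " ≼ " => leq

open CKA

theorem semiLin_nil : semiLin ([] : List ((α → ℕ) × Finset (α → ℕ))) = CRE.zero := rfl

theorem semiLin_cons (p : (α → ℕ) × Finset (α → ℕ)) (L : List ((α → ℕ) × Finset (α → ℕ))) :
    semiLin (p :: L) = linExpr p.1 p.2 ⋓ semiLin L := rfl

theorem semiLin_append (L₁ L₂ : List ((α → ℕ) × Finset (α → ℕ))) :
    semiLin (L₁ ++ L₂) ≈ semiLin L₁ ⋓ semiLin L₂ := by
  unfold semiLin
  rw [List.map_append]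
  exact unionList_append _ _

theorem unionVecs_empty : unionVecs (∅ : Finset (α → ℕ)) = CRE.zero := by
  unfold unionVecs
  rw [Finset.toList_empty]
  rfl

theorem linExpr_empty (u : α → ℕ) : linExpr u ∅ ≈ exprVec u := by
  unfold linExpr
  rw [unionVecs_empty]
  exact (CKA.mul_congr rfl' star_zero).trans (mul_one' _)

theorem one_nf : (CRE.one : CRE α) ≈ semiLin [(0, ∅)] := by
  rw [semiLin_cons, semiLin_nil]
  have h1 : linExpr (0 : α → ℕ) ∅ ≈ CRE.one := (linExpr_empty 0).trans exprVec_zero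
  exact (((CKA.union_comm _ _).trans (CKA.zero_union _)).trans h1).symm

theorem letter_nf (a : α) : (CRE.letter a : CRE α) ≈ semiLin [(Pi.single a 1, ∅)] := by
  rw [semiLin_cons, semiLin_nil]
  have h1 : linExpr (Pi.single a 1 : α → ℕ) ∅ ≈ CRE.letter a :=
    (linExpr_empty _).trans (exprVec_single a)
  exact (((CKA.union_comm _ _).trans (CKA.zero_union _)).trans h1).symm

theorem unionVecs_union (B C : Finset (α → ℕ)) :
    unionVecs (B ∪ C) ≈ unionVecs B ⋓ unionVecs C := by
  classical
  apply CKA.le_antisymm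
  · apply unionVecs_le
    intro v hv
    rcases Finset.mem_union.1 hv with h | h
    · exact le_trans (le_unionVecs h) (le_union_left _ _)
    · exact le_trans (le_unionVecs h) (le_union_right _ _)
  · apply union_le
    · exact unionVecs_le fun v hv => le_unionVecs (Finset.mem_union_left _ hv)
    · exact unionVecs_le fun v hv => le_unionVecs (Finset.mem_union_right _ hv)

theorem linExpr_mul (u v : α → ℕ) (B C : Finset (α → ℕ)) :
    linExpr u B ⬝ linExpr v C ≈ linExpr (u + v) (B ∪ C) := by
  unfold linExpr
  calc (exprVec u ⬝ (unionVecs B).star) ⬝ (exprVec v ⬝ (unionVecs C).star)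
      ≈ (exprVec u ⬝ exprVec v) ⬝ ((unionVecs B).star ⬝ (unionVecs C).star) :=
        mul_mul_mul_comm' _ _ _ _
    _ ≈ exprVec (u + v) ⬝ ((unionVecs B ⋓ unionVecs C).star) :=
        CKA.mul_congr (exprVec_add u v).symm (star_union _ _).symm
    _ ≈ exprVec (u + v) ⬝ (unionVecs (B ∪ C)).star :=
        CKA.mul_congr rfl' (CKA.star_congr (unionVecs_union B C).symm)

/-- Pointwise product representation of semilinear lists. -/
def mulNF (L₁ L₂ : List ((α → ℕ) × Finset (α → ℕ))) : List ((α → ℕ) × Finset (α → ℕ)) :=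
  L₁.flatMap (fun p => L₂.map (fun q => (p.1 + q.1, p.2 ∪ q.2)))

theorem linExpr_mul_semiLin (p : (α → ℕ) × Finset (α → ℕ))
    (L : List ((α → ℕ) × Finset (α → ℕ))) :
    linExpr p.1 p.2 ⬝ semiLin L ≈ semiLin (L.map (fun q => (p.1 + q.1, p.2 ∪ q.2))) := by
  induction L with
  | nil => exact mul_zero' _
  | cons q L ih =>
    rw [semiLin_cons, List.map_cons, semiLin_cons]
    calc linExpr p.1 p.2 ⬝ (linExpr q.1 q.2 ⋓ semiLin L)
        ≈ linExpr p.1 p.2 ⬝ linExpr q.1 q.2 ⋓ linExpr p.1 p.2 ⬝ semiLin L :=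
          CKA.left_distrib _ _ _
      _ ≈ linExpr (p.1 + q.1) (p.2 ∪ q.2) ⋓
            semiLin (L.map (fun q => (p.1 + q.1, p.2 ∪ q.2))) :=
          CKA.union_congr (linExpr_mul _ _ _ _) ih

theorem mul_nf (L₁ L₂ : List ((α → ℕ) × Finset (α → ℕ))) :
    semiLin L₁ ⬝ semiLin L₂ ≈ semiLin (mulNF L₁ L₂) := by
  induction L₁ with
  | nil => rw [semiLin_nil]; exact CKA.zero_mul _
  | cons p L₁ ih =>
    rw [semiLin_cons]
    have hflat : mulNF (p :: L₁) L₂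
        = L₂.map (fun q => (p.1 + q.1, p.2 ∪ q.2)) ++ mulNF L₁ L₂ := by
      unfold mulNF
      rw [List.flatMap_cons]
    rw [hflat]
    calc (linExpr p.1 p.2 ⋓ semiLin L₁) ⬝ semiLin L₂
        ≈ linExpr p.1 p.2 ⬝ semiLin L₂ ⋓ semiLin L₁ ⬝ semiLin L₂ := right_distrib' _ _ _
      _ ≈ semiLin (L₂.map (fun q => (p.1 + q.1, p.2 ∪ q.2))) ⋓ semiLin (mulNF L₁ L₂) :=
          CKA.union_congr (linExpr_mul_semiLin p L₂) ih
      _ ≈ semiLin (L₂.map (fun q => (p.1 + q.1, p.2 ∪ q.2)) ++ mulNF L₁ L₂) :=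
          (semiLin_append _ _).symm

theorem star_linExpr (u : α → ℕ) (B : Finset (α → ℕ)) :
    (linExpr u B).star ≈ CRE.one ⋓ linExpr u (insert u B) := by
  classical
  set x := exprVec u with hx
  set sB := (unionVecs B).star with hsB
  set sI := (unionVecs (insert u B)).star with hsI
  have hx_le : x ≼ sI := le_trans (le_unionVecs (Finset.mem_insert_self u B)) (le_star _)
  have hsB_le : sB ≼ sI :=
    star_le_star (le_trans (unionVecs_le fun v hv =>
      le_unionVecs (Finset.mem_insert_of_mem hv)) (le_star _))
  apply CKA.le_antisymm
  · -- (x ⬝ sB)* ≼ 1 ⋓ x ⬝ sI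
    have habs : (x ⬝ sB) ⬝ (CRE.one ⋓ x ⬝ sI) ≼ CRE.one ⋓ x ⬝ sI := by
      have h1 : (x ⬝ sB) ⬝ CRE.one ≼ CRE.one ⋓ x ⬝ sI := by
        calc (x ⬝ sB) ⬝ CRE.one ≈ x ⬝ sB := mul_one' _
          _ ≼ x ⬝ sI := mul_le_mul (le_refl _) hsB_le
          _ ≼ CRE.one ⋓ x ⬝ sI := le_union_right _ _
      have h2 : (x ⬝ sB) ⬝ (x ⬝ sI) ≼ CRE.one ⋓ x ⬝ sI := by
        calc (x ⬝ sB) ⬝ (x ⬝ sI) ≼ (x ⬝ sI) ⬝ (sI ⬝ sI) :=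
              mul_le_mul (mul_le_mul (le_refl _) hsB_le) (mul_le_mul hx_le (le_refl _))
          _ ≈ x ⬝ (sI ⬝ (sI ⬝ sI)) := (CKA.mul_assoc _ _ _).symm
          _ ≈ x ⬝ (sI ⬝ sI) := CKA.mul_congr rfl' (CKA.mul_congr rfl' (star_mul_star _))
          _ ≈ x ⬝ sI := CKA.mul_congr rfl' (star_mul_star _)
          _ ≼ CRE.one ⋓ x ⬝ sI := le_union_right _ _
      calc (x ⬝ sB) ⬝ (CRE.one ⋓ x ⬝ sI)
          ≈ (x ⬝ sB) ⬝ CRE.one ⋓ (x ⬝ sB) ⬝ (x ⬝ sI) := CKA.left_distrib _ _ _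
        _ ≼ CRE.one ⋓ x ⬝ sI := union_le h1 h2
    calc (x ⬝ sB).star ≈ (x ⬝ sB).star ⬝ CRE.one := (mul_one' _).symm
      _ ≼ (x ⬝ sB).star ⬝ (CRE.one ⋓ x ⬝ sI) := mul_le_mul (le_refl _) (le_union_left _ _)
      _ ≼ CRE.one ⋓ x ⬝ sI := star_absorb habs
  · -- 1 ⋓ x ⬝ sI ≼ (x ⬝ sB)*
    apply union_le (one_le_star _)
    set Z := (x ⬝ sB).star with hZ
    have hxZ : x ⬝ Z ≼ Z := by
      calc x ⬝ Z ≈ (x ⬝ CRE.one) ⬝ Z := CKA.mul_congr (mul_one' _).symm rfl'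
        _ ≼ (x ⬝ sB) ⬝ Z := mul_le_mul (mul_le_mul (le_refl _) (one_le_star _)) (le_refl _)
        _ ≼ Z := mul_star_le _
    have hY : x ⬝ ((x ⬝ sB) ⬝ Z) ≼ (x ⬝ sB) ⬝ Z := by
      calc x ⬝ ((x ⬝ sB) ⬝ Z) ≈ (x ⬝ sB) ⬝ (x ⬝ Z) := mul_left_comm' _ _ _
        _ ≼ (x ⬝ sB) ⬝ Z := mul_le_mul (le_refl _) hxZ
    have hxstar : x.star ⬝ ((x ⬝ sB) ⬝ Z) ≼ (x ⬝ sB) ⬝ Z := star_absorb hY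
    have hsI_le : sI ≼ x.star ⬝ sB := by
      have h1 : unionVecs (insert u B) ≼ x ⋓ unionVecs B := by
        apply unionVecs_le
        intro v hv
        rcases Finset.mem_insert.1 hv with rfl | hv'
        · exact le_union_left _ _
        · exact le_trans (le_unionVecs hv') (le_union_right _ _)
      calc sI ≼ (x ⋓ unionVecs B).star :=
            star_le_star (le_trans h1 (le_star _))
        _ ≈ x.star ⬝ sB := star_union _ _
    calc x ⬝ sI ≼ x ⬝ (x.star ⬝ sB) := mul_le_mul (le_refl _) hsI_le
      _ ≈ x.star ⬝ (x ⬝ sB) := mul_left_comm' _ _ _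
      _ ≈ x.star ⬝ ((x ⬝ sB) ⬝ CRE.one) := CKA.mul_congr rfl' (mul_one' _).symm
      _ ≼ x.star ⬝ ((x ⬝ sB) ⬝ Z) :=
          mul_le_mul (le_refl _) (mul_le_mul (le_refl _) (one_le_star _))
      _ ≼ (x ⬝ sB) ⬝ Z := hxstar
      _ ≼ Z ⬝ Z := mul_le_mul (le_star _) (le_refl _)
      _ ≈ Z := star_mul_star _

theorem star_nf (L : List ((α → ℕ) × Finset (α → ℕ))) :
    ∃ K, (semiLin L).star ≈ semiLin K := by
  classical
  induction L with
  | nil =>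
    refine ⟨[(0, ∅)], ?_⟩
    rw [semiLin_nil]
    exact star_zero.trans one_nf
  | cons p L ih =>
    obtain ⟨K, hK⟩ := ih
    refine ⟨K ++ K.map (fun q => (p.1 + q.1, (insert p.1 p.2) ∪ q.2)), ?_⟩
    rw [semiLin_cons]
    calc (linExpr p.1 p.2 ⋓ semiLin L).star
        ≈ (linExpr p.1 p.2).star ⬝ (semiLin L).star := star_union _ _
      _ ≈ (CRE.one ⋓ linExpr p.1 (insert p.1 p.2)) ⬝ semiLin K :=
          CKA.mul_congr (star_linExpr p.1 p.2) hK
      _ ≈ CRE.one ⬝ semiLin K ⋓ linExpr p.1 (insert p.1 p.2) ⬝ semiLin K :=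
          right_distrib' _ _ _
      _ ≈ semiLin K ⋓ semiLin (K.map (fun q => (p.1 + q.1, (insert p.1 p.2) ∪ q.2))) :=
          CKA.union_congr (CKA.one_mul _) (linExpr_mul_semiLin (p.1, insert p.1 p.2) K)
      _ ≈ semiLin (K ++ K.map (fun q => (p.1 + q.1, (insert p.1 p.2) ∪ q.2))) :=
          (semiLin_append _ _).symm

/-- Every commutative regular expression is provably equal to a semilinear expression. -/
theorem exists_nf (e : CRE α) : ∃ L, e ≈ semiLin L := by
  classical
  induction e with
  | zero => exact ⟨[], rfl'⟩
  | one => exact ⟨[(0, ∅)], one_nf⟩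
  | letter a => exact ⟨[(Pi.single a 1, ∅)], letter_nf a⟩
  | mul e f ihe ihf =>
    obtain ⟨L₁, h₁⟩ := ihe
    obtain ⟨L₂, h₂⟩ := ihf
    exact ⟨mulNF L₁ L₂, (CKA.mul_congr h₁ h₂).trans (mul_nf L₁ L₂)⟩
  | union e f ihe ihf =>
    obtain ⟨L₁, h₁⟩ := ihe
    obtain ⟨L₂, h₂⟩ := ihf
    exact ⟨L₁ ++ L₂, (CKA.union_congr h₁ h₂).trans (semiLin_append L₁ L₂).symm⟩
  | star e ihe =>
    obtain ⟨L, hL⟩ := ihe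
    obtain ⟨K, hK⟩ := star_nf L
    exact ⟨K, (CKA.star_congr hL).trans hK⟩

end NormalForm

/-! ### Completeness -/

section Assembly
set_option linter.unusedSectionVars false
set_option maxHeartbeats 1000000

local infix:50 " ≈ " => CKA
local infix:50 " ≼ " => leq

open CKA

theorem Mon_empty (B : Finset (α → ℕ)) :
    Mon B ∅ = AddSubmonoid.closure (B : Set (α → ℕ)) := by
  rw [Mon, Finset.inf_empty, inf_top_eq]

theorem compSet_eq (p : (α → ℕ) × Finset (α → ℕ)) : compSet p = sem (linExpr p.1 p.2) := by
  rw [sem_linExpr]; rfl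

theorem linExpr_le_semiLin {u : α → ℕ} {B : Finset (α → ℕ)}
    {M : List ((α → ℕ) × Finset (α → ℕ))}
    (hsub : sem (linExpr u B) ⊆ sem (semiLin M)) : linExpr u B ≼ semiLin M := by
  classical
  have hcov : ∀ m ∈ Mon B ∅, ∃ p ∈ M, u + m ∈ compSet p := by
    intro m hm
    rw [Mon_empty] at hm
    have h1 : u + m ∈ sem (linExpr u B) := by rw [sem_linExpr]; exact ⟨m, hm, rfl⟩
    have h2 := hsub h1
    rw [sem_semiLin] at h2
    simp only [Set.mem_iUnion] at h2
    obtain ⟨p, hp, hmem⟩ := h2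
    exact ⟨p, hp, by rw [compSet_eq]; exact hmem⟩
  have hmain := cover_lemma B M (M.toFinset \ ∅).card ∅ (Finset.empty_subset _) (le_refl _) u hcov
  have h0 : linExpr u B ≼ linExpr u (GS B ∅) := by
    apply linExpr_le_linExpr (m := 0) (zero_mem _) (add_zero u).symm
    intro v hv
    rw [GS_spec, Mon_empty]
    exact AddSubmonoid.subset_closure (Finset.mem_coe.2 hv)
  have hFF : FF B M u ∅ ≼ semiLin M := by
    apply FF_le
    intro p hp b hb
    obtain ⟨_, ⟨m, hm, hbeq⟩⟩ := Bases_spec₁ B u ∅ p b hb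
    have hterm : linExpr b (GS B (insert p ∅)) ≼ linExpr p.1 p.2 := by
      apply linExpr_le_linExpr (m := m) hm hbeq
      intro v hv
      have hvM : v ∈ Mon B (insert p ∅) := by
        rw [← GS_spec]
        exact AddSubmonoid.subset_closure (Finset.mem_coe.2 hv)
      exact Mon_le_mem B (Finset.mem_insert_self p ∅) hvM
    refine le_trans hterm (le_unionList ?_)
    exact List.mem_map.2 ⟨p, hp, rfl⟩
  exact le_trans h0 (le_trans hmain hFF)

theorem semiLin_le_semiLin {L M : List ((α → ℕ) × Finset (α → ℕ))}
    (h : sem (semiLin L) ⊆ sem (semiLin M)) : semiLin L ≼ semiLin M := by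
  apply unionList_le
  intro e he
  rcases List.mem_map.1 he with ⟨p, hp, rfl⟩
  apply linExpr_le_semiLin
  intro w hw
  apply h
  rw [sem_semiLin]
  simp only [Set.mem_iUnion]
  exact ⟨p, hp, hw⟩

end Assembly

/-- Completeness of commutative Kleene algebra: `e ≡ f` iff `⟦e⟧ = ⟦f⟧`. -/
theorem completeness (e f : CRE α) : CKA e f ↔ sem e = sem f := by
  constructor
  · exact soundness
  · intro h
    obtain ⟨L, hL⟩ := exists_nf e
    obtain ⟨M, hM⟩ := exists_nf f
    have hLM : sem (semiLin L) = sem (semiLin M) :=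
      (soundness hL).symm.trans (h.trans (soundness hM))
    have h1 : leq (semiLin L) (semiLin M) := semiLin_le_semiLin hLM.subset
    have h2 : leq (semiLin M) (semiLin L) := semiLin_le_semiLin hLM.symm.subset
    exact (hL.trans (CKA.le_antisymm h1 h2)).trans hM.symm

end CKAnote
end

section
/- Every commutative regular expression is provably equal (with respect to ≡) to a finite union of unambiguous linear expressions. -/
namespace CKAnote

variable {α : Type} [Fintype α] [DecidableEq α]

set_option linter.unusedSectionVars false

section QuotientSetup

open Computability

instance ckaSetoid (α : Type) [Fintype α] [DecidableEq α] : Setoid (CRE α) :=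
  ⟨CKA, ⟨CKA.refl, fun h => CKA.symm h, fun h h' => CKA.trans h h'⟩⟩

/-- The quotient of commutative regular expressions by provable equality. -/
abbrev Q (α : Type) [Fintype α] [DecidableEq α] : Type := Quotient (ckaSetoid α)

/-- Class of an expression in the quotient. -/
abbrev mk (e : CRE α) : Q α := Quotient.mk (ckaSetoid α) e

lemma mk_eq {e f : CRE α} : mk e = mk f ↔ CKA e f :=
  ⟨fun h => Quotient.exact h, fun h => Quotient.sound h⟩

instance : Zero (Q α) := ⟨mk .zero⟩
instance : One (Q α) := ⟨mk .one⟩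
instance : Add (Q α) := ⟨Quotient.map₂ .union fun _ _ h _ _ h' => CKA.union_congr h h'⟩
instance : Mul (Q α) := ⟨Quotient.map₂ .mul fun _ _ h _ _ h' => CKA.mul_congr h h'⟩
instance : KStar (Q α) := ⟨Quotient.map .star fun _ _ h => CKA.star_congr h⟩

lemma mk_zero : (0 : Q α) = mk .zero := rfl
lemma mk_one : (1 : Q α) = mk .one := rfl
lemma mk_union (e f : CRE α) : mk (e.union f) = mk e + mk f := rfl
lemma mk_mul (e f : CRE α) : mk (e.mul f) = mk e * mk f := rfl
lemma mk_star (e : CRE α) : mk e.star = (mk e)∗ := rfl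

private lemma cre_mul_one (e : CRE α) : CKA (e.mul .one) e :=
  (CKA.mul_comm e .one).trans (CKA.one_mul e)

private lemma cre_union_zero (e : CRE α) : CKA (e.union .zero) e :=
  (CKA.union_comm e .zero).trans (CKA.zero_union e)

private lemma cre_mul_zero (e : CRE α) : CKA (e.mul .zero) .zero :=
  (CKA.mul_comm e .zero).trans (CKA.zero_mul e)

private lemma cre_right_distrib (e f g : CRE α) :
    CKA ((e.union f).mul g) ((e.mul g).union (f.mul g)) :=
  ((CKA.mul_comm _ g).trans (CKA.left_distrib g e f)).trans
    (CKA.union_congr (CKA.mul_comm g e) (CKA.mul_comm g f))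

instance : CommSemiring (Q α) where
  add := (· + ·)
  mul := (· * ·)
  zero := 0
  one := 1
  nsmul := nsmulRec
  npow := npowRec
  add_assoc a b c := by
    induction a using Quotient.ind; induction b using Quotient.ind; induction c using Quotient.ind
    exact (mk_eq.mpr (CKA.union_assoc _ _ _)).symm
  zero_add a := by
    induction a using Quotient.ind
    exact mk_eq.mpr (CKA.zero_union _)
  add_zero a := by
    induction a using Quotient.ind
    exact mk_eq.mpr (cre_union_zero _)
  add_comm a b := by
    induction a using Quotient.ind; induction b using Quotient.ind
    exact mk_eq.mpr (CKA.union_comm _ _)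
  mul_assoc a b c := by
    induction a using Quotient.ind; induction b using Quotient.ind; induction c using Quotient.ind
    exact (mk_eq.mpr (CKA.mul_assoc _ _ _)).symm
  one_mul a := by
    induction a using Quotient.ind
    exact mk_eq.mpr (CKA.one_mul _)
  mul_one a := by
    induction a using Quotient.ind
    exact mk_eq.mpr (cre_mul_one _)
  mul_comm a b := by
    induction a using Quotient.ind; induction b using Quotient.ind
    exact mk_eq.mpr (CKA.mul_comm _ _)
  zero_mul a := by
    induction a using Quotient.ind
    exact mk_eq.mpr (CKA.zero_mul _)
  mul_zero a := by
    induction a using Quotient.ind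
    exact mk_eq.mpr (cre_mul_zero _)
  left_distrib a b c := by
    induction a using Quotient.ind; induction b using Quotient.ind; induction c using Quotient.ind
    exact mk_eq.mpr (CKA.left_distrib _ _ _)
  right_distrib a b c := by
    induction a using Quotient.ind; induction b using Quotient.ind; induction c using Quotient.ind
    exact mk_eq.mpr (cre_right_distrib _ _ _)

instance : IdemSemiring (Q α) :=
  IdemSemiring.ofSemiring (fun a => by
    induction a using Quotient.ind
    exact mk_eq.mpr (CKA.union_idem _))

lemma mk_le_mk {e f : CRE α} : mk e ≤ mk f ↔ leq e f := by
  rw [← add_eq_right_iff_le, ← mk_union]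
  exact mk_eq

lemma q_star_unfold (a : Q α) : (1 + a * a∗) + a∗ = a∗ := by
  induction a using Quotient.ind
  exact mk_eq.mpr (CKA.star_unfold _)

lemma q_one_le_kstar (a : Q α) : 1 ≤ a∗ := by
  conv_rhs => rw [← q_star_unfold a]
  exact le_trans (le_self_add : (1:Q α) ≤ 1 + a * a∗) le_self_add

lemma q_mul_kstar_le_kstar (a : Q α) : a * a∗ ≤ a∗ := by
  conv_rhs => rw [← q_star_unfold a]
  exact le_trans (le_add_self : a * a∗ ≤ 1 + a * a∗) le_self_add

lemma q_kstar_mul_le_self (a b : Q α) (h : a * b ≤ b) : a∗ * b ≤ b := by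
  induction a using Quotient.ind; induction b using Quotient.ind
  rw [← add_eq_right_iff_le] at h ⊢
  exact mk_eq.mpr (CKA.star_lfp (mk_eq.mp h))

instance : KleeneAlgebra (Q α) where
  one_le_kstar := q_one_le_kstar
  mul_kstar_le_kstar := q_mul_kstar_le_kstar
  kstar_mul_le_kstar a := by rw [mul_comm]; exact q_mul_kstar_le_kstar a
  kstar_mul_le_self {a b} := q_kstar_mul_le_self a b
  mul_kstar_le_self {a b} h := by
    rw [mul_comm]; exact q_kstar_mul_le_self a b (by rwa [mul_comm] at h)

end QuotientSetup
section KleeneLemmas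

open Computability

variable {ι : Type*}

lemma q_one_le_mul {a b : Q α} (h1 : 1 ≤ a) (h2 : 1 ≤ b) : 1 ≤ a * b := by
  simpa using mul_le_mul' h1 h2

lemma q_sum_le {s : Finset ι} {f : ι → Q α} {c : Q α} (h : ∀ i ∈ s, f i ≤ c) :
    ∑ i ∈ s, f i ≤ c := by
  induction s using Finset.cons_induction with
  | empty => simpa using zero_le c
  | cons a s ha ih =>
    rw [Finset.sum_cons]
    exact add_le (h a (Finset.mem_cons_self a s)) (ih fun i hi => h i (Finset.mem_cons_of_mem hi))

lemma q_le_sum {s : Finset ι} {f : ι → Q α} {i : ι} (hi : i ∈ s) : f i ≤ ∑ j ∈ s, f j :=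
  Finset.single_le_sum (fun j _ => zero_le) hi

lemma q_unfold (a : Q α) : a∗ = 1 + a * a∗ := by
  refine le_antisymm (kstar_le_of_mul_le_left le_self_add ?_) (add_le one_le_kstar mul_kstar_le_kstar)
  calc (1 + a * a∗) * a = a + a * (a∗ * a) := by ring
    _ ≤ a * a∗ + a * a∗ := by
        refine add_le_add ?_ (mul_le_mul_right kstar_mul_le_kstar a)
        calc a = a * 1 := by ring
          _ ≤ a * a∗ := mul_le_mul_right one_le_kstar a
    _ = a * a∗ := add_idem _
    _ ≤ 1 + a * a∗ := le_add_self

lemma q_add_kstar (a b : Q α) : (a + b)∗ = a∗ * b∗ := by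
  refine le_antisymm (kstar_le_of_mul_le_right (q_one_le_mul one_le_kstar one_le_kstar) ?_) ?_
  · calc (a + b) * (a∗ * b∗) = (a * a∗) * b∗ + a∗ * (b * b∗) := by ring
      _ ≤ a∗ * b∗ + a∗ * b∗ :=
          add_le_add (mul_le_mul_left mul_kstar_le_kstar _) (mul_le_mul_right mul_kstar_le_kstar _)
      _ = a∗ * b∗ := add_idem _
  · calc a∗ * b∗ ≤ (a + b)∗ * (a + b)∗ :=
        mul_le_mul' (kstar_mono le_self_add) (kstar_mono le_add_self)
      _ = (a + b)∗ := kstar_mul_kstar _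

lemma q_one_add_kstar (a : Q α) : (1 + a)∗ = a∗ := by
  refine le_antisymm (kstar_le_of_mul_le_right one_le_kstar ?_) (kstar_mono le_add_self)
  calc (1 + a) * a∗ = a∗ + a * a∗ := by ring
    _ ≤ a∗ + a∗ := add_le_add le_rfl mul_kstar_le_kstar
    _ = a∗ := add_idem _

lemma q_kstar_le_kstar {x z : Q α} (h : x ≤ z∗) : x∗ ≤ z∗ :=
  (kstar_mono h).trans (kstar_idem z).le

lemma q_pow_le_kstar {x z : Q α} (h : x ≤ z∗) (n : ℕ) : x ^ n ≤ z∗ := by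
  induction n with
  | zero => simpa using one_le_kstar
  | succ n ih =>
    calc x ^ (n + 1) = x ^ n * x := pow_succ x n
      _ ≤ z∗ * z∗ := mul_le_mul' ih h
      _ = z∗ := kstar_mul_kstar z

lemma q_prod_le_kstar {s : Finset ι} {f : ι → Q α} {z : Q α} (h : ∀ i ∈ s, f i ≤ z∗) :
    ∏ i ∈ s, f i ≤ z∗ := by
  induction s using Finset.cons_induction with
  | empty => simpa using one_le_kstar
  | cons a s ha ih =>
    rw [Finset.prod_cons]
    calc f a * ∏ i ∈ s, f i ≤ z∗ * z∗ :=
          mul_le_mul' (h a (Finset.mem_cons_self a s)) (ih fun i hi => h i (Finset.mem_cons_of_mem hi))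
      _ = z∗ := kstar_mul_kstar z

lemma q_mul_kstar_star (a b : Q α) : (a * b∗)∗ = 1 + a * (a + b)∗ := by
  have hstep : (a + b)∗ ≤ b∗ * (a * b∗)∗ := by
    refine kstar_le_of_mul_le_right (q_one_le_mul one_le_kstar one_le_kstar) ?_
    calc (a + b) * (b∗ * (a * b∗)∗)
        = (a * b∗) * (a * b∗)∗ + (b * b∗) * (a * b∗)∗ := by ring
      _ ≤ (a * b∗)∗ + b∗ * (a * b∗)∗ :=
          add_le_add mul_kstar_le_kstar (mul_le_mul_left mul_kstar_le_kstar _)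
      _ ≤ b∗ * (a * b∗)∗ + b∗ * (a * b∗)∗ :=
          add_le_add (le_mul_of_one_le_left' one_le_kstar) le_rfl
      _ = b∗ * (a * b∗)∗ := add_idem _
  refine le_antisymm (kstar_le_of_mul_le_right le_self_add ?_) (add_le one_le_kstar ?_)
  · calc (a * b∗) * (1 + a * (a + b)∗)
        = a * b∗ + a * ((b∗ * a) * (a + b)∗) := by ring
      _ ≤ a * (a + b)∗ + a * (a + b)∗ := by
          refine add_le_add (mul_le_mul_right (kstar_mono le_add_self) a) (mul_le_mul_right ?_ a)
          calc (b∗ * a) * (a + b)∗ ≤ ((a + b)∗ * (a + b)∗) * (a + b)∗ :=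
                mul_le_mul_left (mul_le_mul' (kstar_mono le_add_self) (le_self_add.trans le_kstar)) _
            _ = (a + b)∗ := by rw [kstar_mul_kstar, kstar_mul_kstar]
      _ = a * (a + b)∗ := add_idem _
      _ ≤ 1 + a * (a + b)∗ := le_add_self
  · calc a * (a + b)∗ ≤ a * (b∗ * (a * b∗)∗) := mul_le_mul_right hstep a
      _ = (a * b∗) * (a * b∗)∗ := by ring
      _ ≤ (a * b∗)∗ := mul_kstar_le_kstar

lemma q_sum_kstar {s : Finset ι} {f : ι → Q α} :
    (∑ i ∈ s, f i)∗ = ∏ i ∈ s, (f i)∗ := by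
  induction s using Finset.cons_induction with
  | empty => simp
  | cons a s ha ih => rw [Finset.sum_cons, Finset.prod_cons, q_add_kstar, ih]

/-- `a^{<c}` in the quotient. -/
def ltp (a : Q α) : ℕ → Q α
  | 0 => 0
  | c + 1 => (a + 1) ^ c

lemma ltp_eq_sum (a : Q α) (c : ℕ) : ltp a c = ∑ m ∈ Finset.range c, a ^ m := by
  induction c with
  | zero => simp [ltp]
  | succ c ih =>
    cases c with
    | zero => simp [ltp]
    | succ c =>
      have ih' : (a + 1) ^ c = ∑ m ∈ Finset.range (c + 1), a ^ m := ih
      show (a + 1) ^ (c + 1) = ∑ m ∈ Finset.range (c + 2), a ^ m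
      have hY : ∑ m ∈ Finset.range c, a ^ (m + 1) ≤ ∑ m ∈ Finset.range (c + 1), a ^ (m + 1) :=
        Finset.sum_le_sum_of_subset (Finset.range_subset_range.2 (Nat.le_succ c))
      calc (a + 1) ^ (c + 1) = (a + 1) ^ c * (a + 1) := pow_succ _ _
        _ = (∑ m ∈ Finset.range (c + 1), a ^ m) * a + ∑ m ∈ Finset.range (c + 1), a ^ m := by
            rw [ih']; ring
        _ = (∑ m ∈ Finset.range (c + 1), a ^ (m + 1)) + ∑ m ∈ Finset.range (c + 1), a ^ m := by
            rw [Finset.sum_mul]; simp only [← pow_succ]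
        _ = (∑ m ∈ Finset.range (c + 1), a ^ (m + 1)) +
              ((∑ m ∈ Finset.range c, a ^ (m + 1)) + a ^ 0) := by
            rw [Finset.sum_range_succ' (fun m => a ^ m) c]
        _ = ((∑ m ∈ Finset.range (c + 1), a ^ (m + 1)) + ∑ m ∈ Finset.range c, a ^ (m + 1)) + a ^ 0 := by
            ring
        _ = (∑ m ∈ Finset.range (c + 1), a ^ (m + 1)) + a ^ 0 := by rw [hY.add_eq_left]
        _ = ∑ m ∈ Finset.range (c + 2), a ^ m := (Finset.sum_range_succ' (fun m => a ^ m) (c + 1)).symm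

lemma ltp_succ (a : Q α) (c : ℕ) : ltp a (c + 1) = ltp a c + a ^ c := by
  rw [ltp_eq_sum, ltp_eq_sum, Finset.sum_range_succ]

lemma one_le_ltp (a : Q α) {c : ℕ} (hc : 0 < c) : 1 ≤ ltp a c := by
  induction c with
  | zero => exact absurd hc (lt_irrefl 0)
  | succ c ih =>
    cases Nat.eq_zero_or_pos c with
    | inl h => subst h; simp [ltp]
    | inr h => rw [ltp_succ]; exact (ih h).trans le_self_add

lemma ltp_le_kstar (a : Q α) (c : ℕ) : ltp a c ≤ a∗ := by
  cases c with
  | zero => exact zero_le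
  | succ c =>
    show (a + 1) ^ c ≤ a∗
    have : (a + 1)∗ = a∗ := by rw [add_comm, q_one_add_kstar]
    calc (a + 1) ^ c ≤ (a + 1)∗ := pow_le_kstar
      _ = a∗ := this

lemma mul_ltp_le (a : Q α) (c : ℕ) : a * ltp a c ≤ ltp a c + a ^ c := by
  induction c with
  | zero => simp [ltp]
  | succ c ih =>
    rw [ltp_succ, mul_add]
    exact add_le_add ih (by rw [pow_succ, mul_comm])

lemma q_kstar_split (a : Q α) {c : ℕ} (hc : 0 < c) : a∗ = ltp a c + a ^ c * a∗ := by
  induction c with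
  | zero => exact absurd hc (lt_irrefl 0)
  | succ c ih =>
    cases Nat.eq_zero_or_pos c with
    | inl h =>
      subst h
      show a∗ = (a + 1) ^ 0 + a ^ 1 * a∗
      rw [pow_zero, pow_one]; exact q_unfold a
    | inr h =>
      calc a∗ = ltp a c + a ^ c * a∗ := ih h
        _ = ltp a c + a ^ c * (1 + a * a∗) := by rw [← q_unfold]
        _ = (ltp a c + a ^ c) + a ^ (c + 1) * a∗ := by ring
        _ = ltp a (c + 1) + a ^ (c + 1) * a∗ := by rw [ltp_succ]

end KleeneLemmas
section SplitCore

open Computability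

variable {ι : Type*} [DecidableEq ι]

lemma q_le_sum' (s : Finset ι) (f : ι → Q α) {i : ι} (hi : i ∈ s) : f i ≤ ∑ j ∈ s, f j :=
  Finset.single_le_sum (fun j _ => zero_le) hi

/-- The key "budget splitting" identity. -/
lemma q_split (x : ι → Q α) (c : ι → ℕ) (s : Finset ι) (hc : ∀ i ∈ s, 0 < c i) :
    (∑ i ∈ s, x i)∗ ≤
      (∏ i ∈ s, x i ^ c i) * (∑ i ∈ s, x i)∗ +
        ∑ i ∈ s, ltp (x i) (c i) * (∑ j ∈ s.erase i, x j)∗ := by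
  induction s using Finset.cons_induction with
  | empty => simp
  | cons a s ha ih =>
    have hca : 0 < c a := hc a (Finset.mem_cons_self a s)
    have hLHS : (∑ i ∈ Finset.cons a s ha, x i)∗
        = ltp (x a) (c a) * (∑ i ∈ s, x i)∗ +
          x a ^ c a * ((x a)∗ * (∑ i ∈ s, x i)∗) := by
      rw [Finset.sum_cons, q_add_kstar]
      conv_lhs => rw [q_kstar_split (x a) hca]
      ring
    refine le_trans (le_of_eq hLHS) (add_le ?_ ?_)
    · -- low-budget term for `a`
      have h1 : ltp (x a) (c a) * (∑ i ∈ s, x i)∗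
          = ltp (x a) (c a) * (∑ j ∈ (Finset.cons a s ha).erase a, x j)∗ := by
        rw [Finset.erase_cons]
      rw [h1]
      exact le_trans
        (q_le_sum' (Finset.cons a s ha)
          (fun i => ltp (x i) (c i) * (∑ j ∈ (Finset.cons a s ha).erase i, x j)∗)
          (Finset.mem_cons_self a s)) le_add_self
    · -- full-budget term for `a`: use the induction hypothesis
      have hih := ih (fun i hi => hc i (Finset.mem_cons_of_mem hi))
      calc x a ^ c a * ((x a)∗ * (∑ i ∈ s, x i)∗)
          ≤ x a ^ c a * ((x a)∗ *
              ((∏ i ∈ s, x i ^ c i) * (∑ i ∈ s, x i)∗ +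
                ∑ i ∈ s, ltp (x i) (c i) * (∑ j ∈ s.erase i, x j)∗)) := by
            exact mul_le_mul_right (mul_le_mul_right hih _) _
        _ = (∏ i ∈ Finset.cons a s ha, x i ^ c i) * ((x a)∗ * (∑ i ∈ s, x i)∗) +
              (x a ^ c a * (x a)∗) *
                ∑ i ∈ s, ltp (x i) (c i) * (∑ j ∈ s.erase i, x j)∗ := by
            rw [Finset.prod_cons]; ring
        _ ≤ (∏ i ∈ Finset.cons a s ha, x i ^ c i) * (∑ i ∈ Finset.cons a s ha, x i)∗ +
              ∑ i ∈ Finset.cons a s ha, ltp (x i) (c i) *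
                (∑ j ∈ (Finset.cons a s ha).erase i, x j)∗ := by
            refine add_le_add (le_of_eq ?_) ?_
            · rw [Finset.sum_cons, q_add_kstar]
            · rw [Finset.mul_sum]
              refine q_sum_le fun i hi => ?_
              have hia : a ≠ i := fun h => ha (h ▸ hi)
              have hmem : a ∈ (Finset.cons a s ha).erase i :=
                Finset.mem_erase.2 ⟨hia, Finset.mem_cons_self a s⟩
              have hxa : x a ≤ (∑ j ∈ (Finset.cons a s ha).erase i, x j)∗ :=
                (q_le_sum hmem).trans le_kstar
              have h2 : x a ^ c a * (x a)∗ ≤ (∑ j ∈ (Finset.cons a s ha).erase i, x j)∗ := by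
                calc x a ^ c a * (x a)∗
                    ≤ (∑ j ∈ (Finset.cons a s ha).erase i, x j)∗ *
                      (∑ j ∈ (Finset.cons a s ha).erase i, x j)∗ :=
                      mul_le_mul' (q_pow_le_kstar hxa _) (q_kstar_le_kstar hxa)
                  _ = _ := kstar_mul_kstar _
              have h3 : (∑ j ∈ s.erase i, x j)∗ ≤ (∑ j ∈ (Finset.cons a s ha).erase i, x j)∗ :=
                kstar_mono (Finset.sum_le_sum_of_subset
                  (Finset.erase_subset_erase i (Finset.subset_cons ha)))
              calc x a ^ c a * (x a)∗ * (ltp (x i) (c i) * (∑ j ∈ s.erase i, x j)∗)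
                  = ltp (x i) (c i) * ((x a ^ c a * (x a)∗) * (∑ j ∈ s.erase i, x j)∗) := by ring
                _ ≤ ltp (x i) (c i) * ((∑ j ∈ (Finset.cons a s ha).erase i, x j)∗ *
                      (∑ j ∈ (Finset.cons a s ha).erase i, x j)∗) :=
                    mul_le_mul_right (mul_le_mul' h2 h3) _
                _ = ltp (x i) (c i) * (∑ j ∈ (Finset.cons a s ha).erase i, x j)∗ := by
                    rw [kstar_mul_kstar]
                _ ≤ _ := q_le_sum' (Finset.cons a s ha)
                    (fun i => ltp (x i) (c i) * (∑ j ∈ (Finset.cons a s ha).erase i, x j)∗)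
                    (Finset.mem_cons_of_mem hi)

/-- The key elimination lemma. -/
lemma q_core (x : ι → Q α) (c : ι → ℕ) (s : Finset ι) (hc : ∀ i ∈ s, 0 < c i)
    (hs : s.Nonempty) :
    (∑ i ∈ s, x i)∗ ≤
      (∏ i ∈ s, x i ^ c i)∗ * ∑ i ∈ s, ltp (x i) (c i) * (∑ j ∈ s.erase i, x j)∗ := by
  set X : Q α := ∏ i ∈ s, x i ^ c i with hX
  set R : Q α := ∑ i ∈ s, ltp (x i) (c i) * (∑ j ∈ s.erase i, x j)∗ with hR
  have hle : ∀ j ∈ s, ltp (x j) (c j) * (∑ k ∈ s.erase j, x k)∗ ≤ R := fun j hj =>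
    q_le_sum' s (fun i => ltp (x i) (c i) * (∑ j ∈ s.erase i, x j)∗) hj
  have h1R : 1 ≤ R := by
    obtain ⟨i0, hi0⟩ := hs
    exact le_trans (q_one_le_mul (one_le_ltp _ (hc i0 hi0)) one_le_kstar) (hle i0 hi0)
  have h1 : 1 ≤ X∗ * R := q_one_le_mul one_le_kstar h1R
  suffices hcl : (∑ i ∈ s, x i) * (X∗ * R) ≤ X∗ * R by
    have h2 := q_kstar_mul_le_self _ _ hcl
    calc (∑ i ∈ s, x i)∗ = (∑ i ∈ s, x i)∗ * 1 := (mul_one _).symm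
      _ ≤ (∑ i ∈ s, x i)∗ * (X∗ * R) := mul_le_mul_right h1 _
      _ ≤ X∗ * R := h2
  rw [Finset.sum_mul]
  refine q_sum_le fun i hi => ?_
  suffices h2 : x i * R ≤ X∗ * R by
    calc x i * (X∗ * R) = X∗ * (x i * R) := by ring
      _ ≤ X∗ * (X∗ * R) := mul_le_mul_right h2 _
      _ = (X∗ * X∗) * R := by ring
      _ = X∗ * R := by rw [kstar_mul_kstar]
  rw [hR, Finset.mul_sum]
  rw [← hR]
  refine q_sum_le fun j hj => ?_
  by_cases hij : i = j
  · subst hij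
    have hover : x i * (ltp (x i) (c i) * (∑ j ∈ s.erase i, x j)∗)
        ≤ ltp (x i) (c i) * (∑ j ∈ s.erase i, x j)∗ +
          x i ^ c i * (∑ j ∈ s.erase i, x j)∗ := by
      calc x i * (ltp (x i) (c i) * (∑ j ∈ s.erase i, x j)∗)
          = (x i * ltp (x i) (c i)) * (∑ j ∈ s.erase i, x j)∗ := by ring
        _ ≤ (ltp (x i) (c i) + x i ^ c i) * (∑ j ∈ s.erase i, x j)∗ :=
            mul_le_mul_left (mul_ltp_le _ _) _
        _ = _ := by ring
    refine hover.trans (add_le ?_ ?_)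
    · exact le_trans (hle i hj) (le_mul_of_one_le_left' one_le_kstar)
    · -- overflow: apply the splitting lemma on `s.erase i`
      have hsp := q_split x c (s.erase i) (fun k hk => hc k (Finset.mem_of_mem_erase hk))
      calc x i ^ c i * (∑ j ∈ s.erase i, x j)∗
          ≤ x i ^ c i * ((∏ k ∈ s.erase i, x k ^ c k) * (∑ j ∈ s.erase i, x j)∗ +
              ∑ k ∈ s.erase i, ltp (x k) (c k) * (∑ j ∈ (s.erase i).erase k, x j)∗) :=
            mul_le_mul_right hsp _
        _ = X * (∑ j ∈ s.erase i, x j)∗ +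
              x i ^ c i * ∑ k ∈ s.erase i, ltp (x k) (c k) *
                (∑ j ∈ (s.erase i).erase k, x j)∗ := by
            rw [hX, ← Finset.mul_prod_erase s (fun k => x k ^ c k) hj]; ring
        _ ≤ X∗ * R + X∗ * R := by
            refine add_le_add ?_ ?_
            · refine mul_le_mul' le_kstar ?_
              calc (∑ j ∈ s.erase i, x j)∗
                  = 1 * (∑ j ∈ s.erase i, x j)∗ := (one_mul _).symm
                _ ≤ ltp (x i) (c i) * (∑ j ∈ s.erase i, x j)∗ :=
                    mul_le_mul_left (one_le_ltp _ (hc i hj)) _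
                _ ≤ R := hle i hj
            · rw [Finset.mul_sum]
              refine q_sum_le fun k hk => ?_
              have hki : k ∈ s := Finset.mem_of_mem_erase hk
              have hik : i ∈ s.erase k :=
                Finset.mem_erase.2 ⟨Ne.symm (Finset.mem_erase.1 hk).1, hj⟩
              have hxi : x i ≤ (∑ j ∈ s.erase k, x j)∗ := (q_le_sum hik).trans le_kstar
              have hsub : (∑ j ∈ (s.erase i).erase k, x j)∗ ≤ (∑ j ∈ s.erase k, x j)∗ :=
                kstar_mono (Finset.sum_le_sum_of_subset
                  (Finset.erase_subset_erase k (Finset.erase_subset _ _)))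
              calc x i ^ c i * (ltp (x k) (c k) * (∑ j ∈ (s.erase i).erase k, x j)∗)
                  = ltp (x k) (c k) * (x i ^ c i * (∑ j ∈ (s.erase i).erase k, x j)∗) := by ring
                _ ≤ ltp (x k) (c k) * ((∑ j ∈ s.erase k, x j)∗ * (∑ j ∈ s.erase k, x j)∗) :=
                    mul_le_mul_right (mul_le_mul' (q_pow_le_kstar hxi _) hsub) _
                _ = ltp (x k) (c k) * (∑ j ∈ s.erase k, x j)∗ := by rw [kstar_mul_kstar]
                _ ≤ R := hle k hki
                _ ≤ X∗ * R := le_mul_of_one_le_left' one_le_kstar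
        _ = X∗ * R := add_idem _
  · -- `i` is absorbed into the star over `s.erase j`
    have hmem : i ∈ s.erase j := Finset.mem_erase.2 ⟨hij, hi⟩
    have hxi : x i * (∑ k ∈ s.erase j, x k)∗ ≤ (∑ k ∈ s.erase j, x k)∗ := by
      calc x i * (∑ k ∈ s.erase j, x k)∗
          ≤ (∑ k ∈ s.erase j, x k)∗ * (∑ k ∈ s.erase j, x k)∗ :=
            mul_le_mul_left ((q_le_sum hmem).trans le_kstar) _
        _ = _ := kstar_mul_kstar _
    calc x i * (ltp (x j) (c j) * (∑ k ∈ s.erase j, x k)∗)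
        = ltp (x j) (c j) * (x i * (∑ k ∈ s.erase j, x k)∗) := by ring
      _ ≤ ltp (x j) (c j) * (∑ k ∈ s.erase j, x k)∗ := mul_le_mul_right hxi _
      _ ≤ R := hle j hj
      _ ≤ X∗ * R := le_mul_of_one_le_left' one_le_kstar

end SplitCore
section Bridge

open Computability

lemma mk_pow (e : CRE α) (n : ℕ) : mk (pow e n) = mk e ^ n := by
  induction n with
  | zero => rfl
  | succ n ih =>
    show mk (e.mul (pow e n)) = mk e ^ (n + 1)
    rw [mk_mul, ih, pow_succ, mul_comm]

lemma mk_ltPow (e : CRE α) (c : ℕ) : mk (ltPow e c) = ltp (mk e) c := by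
  cases c with
  | zero => rfl
  | succ c =>
    show mk (pow (e.union .one) c) = (mk e + 1) ^ c
    rw [mk_pow, mk_union, mk_one]

lemma mk_unionList (l : List (CRE α)) : mk (unionList l) = (l.map mk).sum := by
  induction l with
  | nil => rfl
  | cons e l ih =>
    show mk (e.union (unionList l)) = _
    rw [mk_union, ih, List.map_cons, List.sum_cons]

lemma mk_prodList (l : List (CRE α)) : mk (prodList l) = (l.map mk).prod := by
  induction l with
  | nil => rfl
  | cons e l ih =>
    show mk (e.mul (prodList l)) = _
    rw [mk_mul, ih, List.map_cons, List.prod_cons]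

/-- The class of `expr(u)` in the quotient, as a `Finset` product. -/
noncomputable def ev (u : α → ℕ) : Q α := ∏ a, (mk (.letter a)) ^ (u a)

lemma mk_exprVec (u : α → ℕ) : mk (exprVec u) = ev u := by
  rw [exprVec, mk_prodList, List.map_map, ev, ← Finset.prod_map_toList]
  congr 1
  refine List.map_congr_left fun a _ => ?_
  exact mk_pow _ _

lemma ev_zero : ev (0 : α → ℕ) = 1 := by simp [ev]

lemma ev_add (u v : α → ℕ) : ev (u + v) = ev u * ev v := by
  rw [ev, ev, ev, ← Finset.prod_mul_distrib]
  refine Finset.prod_congr rfl fun a _ => ?_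
  show mk (.letter a) ^ (u a + v a) = _
  rw [pow_add]

lemma ev_smul (n : ℕ) (u : α → ℕ) : ev (n • u) = ev u ^ n := by
  rw [ev, ev, ← Finset.prod_pow]
  refine Finset.prod_congr rfl fun a _ => ?_
  show mk (.letter a) ^ (n * u a) = _
  rw [mul_comm, pow_mul]

lemma ev_single (a : α) : ev (Pi.single a 1) = mk (.letter a) := by
  rw [ev]
  rw [Finset.prod_eq_single a (fun b _ hb => by rw [Pi.single_eq_of_ne hb, pow_zero])
    (fun h => absurd (Finset.mem_univ a) h)]
  rw [Pi.single_eq_same, pow_one]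

lemma ev_sum {ι : Type*} (s : Finset ι) (v : ι → α → ℕ) (c : ι → ℕ) :
    ev (∑ i ∈ s, c i • v i) = ∏ i ∈ s, ev (v i) ^ c i := by
  induction s using Finset.cons_induction with
  | empty => simpa using ev_zero
  | cons a s ha ih => rw [Finset.sum_cons, Finset.prod_cons, ev_add, ev_smul, ih]

/-- The class of `⋃_{b ∈ B} expr(b)`. -/
noncomputable def UV (B : Finset (α → ℕ)) : Q α := ∑ b ∈ B, ev b

lemma mk_unionVecs (B : Finset (α → ℕ)) : mk (unionVecs B) = UV B := by
  rw [unionVecs, mk_unionList, List.map_map, UV, ← Finset.sum_map_toList]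
  congr 1
  exact List.map_congr_left fun b _ => mk_exprVec b

/-- The class of the semilinear expression attached to `L`. -/
noncomputable def SL (L : List ((α → ℕ) × Finset (α → ℕ))) : Q α :=
  (L.map fun p => ev p.1 * (UV p.2)∗).sum

lemma mk_linExpr (u : α → ℕ) (B : Finset (α → ℕ)) :
    mk (linExpr u B) = ev u * (UV B)∗ := by
  rw [linExpr, mk_mul, mk_exprVec, mk_star, mk_unionVecs]

lemma mk_semiLin (L : List ((α → ℕ) × Finset (α → ℕ))) : mk (semiLin L) = SL L := by
  rw [semiLin, mk_unionList, List.map_map, SL]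
  congr 1
  exact List.map_congr_left fun p _ => mk_linExpr p.1 p.2

lemma SL_nil : SL ([] : List ((α → ℕ) × Finset (α → ℕ))) = 0 := rfl

lemma SL_cons (p : (α → ℕ) × Finset (α → ℕ)) (L : List ((α → ℕ) × Finset (α → ℕ))) :
    SL (p :: L) = ev p.1 * (UV p.2)∗ + SL L := by
  rw [SL, List.map_cons, List.sum_cons, SL]

lemma SL_append (L₁ L₂ : List ((α → ℕ) × Finset (α → ℕ))) :
    SL (L₁ ++ L₂) = SL L₁ + SL L₂ := by
  rw [SL, SL, SL, List.map_append, List.sum_append]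

lemma SL_shift (w : α → ℕ) (L : List ((α → ℕ) × Finset (α → ℕ))) :
    ev w * SL L = SL (L.map fun p => (w + p.1, p.2)) := by
  induction L with
  | nil => simp [SL_nil]
  | cons p L ih =>
    rw [List.map_cons, SL_cons, SL_cons, mul_add, ih]
    congr 1
    show ev w * (ev p.1 * (UV p.2)∗) = ev (w + p.1) * (UV p.2)∗
    rw [ev_add]; ring

lemma UV_le_of_subset {B C : Finset (α → ℕ)} (h : B ⊆ C) : UV B ≤ UV C :=
  Finset.sum_le_sum_of_subset h

lemma ev_le_UV {b : α → ℕ} {B : Finset (α → ℕ)} (h : b ∈ B) : ev b ≤ UV B :=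
  q_le_sum' B ev h

lemma UV_union (B C : Finset (α → ℕ)) : UV (B ∪ C) = UV B + UV C := by
  refine le_antisymm ?_ ?_
  · refine q_sum_le fun b hb => ?_
    rcases Finset.mem_union.1 hb with h | h
    · exact le_trans (ev_le_UV h) le_self_add
    · exact le_trans (ev_le_UV h) le_add_self
  · exact add_le (UV_le_of_subset Finset.subset_union_left)
      (UV_le_of_subset Finset.subset_union_right)

lemma UV_insert (u : α → ℕ) (B : Finset (α → ℕ)) : UV (insert u B) = ev u + UV B := by
  rw [Finset.insert_eq, UV_union]
  congr 1
  rw [UV, Finset.sum_singleton]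

lemma UV_empty : UV (∅ : Finset (α → ℕ)) = 0 := rfl

lemma Independent_empty : Independent (∅ : Finset (α → ℕ)) := by
  intro c d _ b hb
  exact absurd hb (Finset.notMem_empty b)

end Bridge
section FixStar

open Computability

/-- From a failure of independence, extract a disjoint-support relation. -/
lemma not_independent_rel {B : Finset (α → ℕ)} (h : ¬ Independent B) :
    ∃ c d : (α → ℕ) → ℕ, (∑ b ∈ B, c b • b) = (∑ b ∈ B, d b • b) ∧
      (∀ b, c b = 0 ∨ d b = 0) ∧ ∃ b ∈ B, 0 < c b := by
  rw [Independent] at h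
  push_neg at h
  obtain ⟨c, d, hsum, b0, hb0, hne⟩ := h
  set c' : (α → ℕ) → ℕ := fun b => c b - min (c b) (d b) with hc'
  set d' : (α → ℕ) → ℕ := fun b => d b - min (c b) (d b) with hd'
  have hrel : (∑ b ∈ B, c' b • b) = (∑ b ∈ B, d' b • b) := by
    have key : (∑ b ∈ B, c' b • b) + (∑ b ∈ B, (min (c b) (d b)) • b)
        = (∑ b ∈ B, d' b • b) + (∑ b ∈ B, (min (c b) (d b)) • b) := by
      rw [← Finset.sum_add_distrib, ← Finset.sum_add_distrib]
      calc ∑ b ∈ B, (c' b • b + min (c b) (d b) • b)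
          = ∑ b ∈ B, c b • b := by
            refine Finset.sum_congr rfl fun b _ => ?_
            rw [← add_smul]
            congr 1
            simp only [hc']
            omega
        _ = ∑ b ∈ B, d b • b := hsum
        _ = ∑ b ∈ B, (d' b • b + min (c b) (d b) • b) := by
            refine Finset.sum_congr rfl fun b _ => ?_
            rw [← add_smul]
            congr 1
            simp only [hd']
            omega
    exact add_right_cancel key
  have hdisj : ∀ b, c' b = 0 ∨ d' b = 0 := by
    intro b
    simp only [hc', hd']
    omega
  have hne' : c' b0 ≠ d' b0 := by
    simp only [hc', hd']
    omega
  rcases Nat.eq_zero_or_pos (c' b0) with h0 | hpos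
  · refine ⟨d', c', hrel.symm, fun b => (hdisj b).symm, b0, hb0, ?_⟩
    omega
  · exact ⟨c', d', hrel, hdisj, b0, hb0, hpos⟩

/-- One step of the independence-repair rewriting. -/
lemma q_step (B : Finset (α → ℕ)) (c d : (α → ℕ) → ℕ)
    (hrel : (∑ b ∈ B, c b • b) = (∑ b ∈ B, d b • b))
    (hdisj : ∀ b, c b = 0 ∨ d b = 0)
    (hex : ∃ b ∈ B, 0 < c b) :
    (UV B)∗ = ∑ b₀ ∈ B.filter (fun b => 0 < c b),
      ltp (ev b₀) (c b₀) * (UV (B.erase b₀))∗ := by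
  classical
  set P := B.filter (fun b => 0 < c b) with hPdef
  have hPB : P ⊆ B := Finset.filter_subset _ _
  have hPne : P.Nonempty := by
    obtain ⟨b, hb, hcb⟩ := hex
    exact ⟨b, Finset.mem_filter.2 ⟨hb, hcb⟩⟩
  have hcP : ∀ b ∈ P, 0 < c b := fun b hb => (Finset.mem_filter.1 hb).2
  refine le_antisymm ?_ ?_
  · -- the hard direction
    set Qs := B.filter (fun b => ¬ 0 < c b) with hQdef
    have hBsplit : UV B = UV P + UV Qs := by
      rw [UV, UV, UV, Finset.sum_filter_add_sum_filter_not]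
    have hcore := q_core ev c P hcP hPne
    have hXv : (∏ b ∈ P, ev b ^ c b) = ev (∑ b ∈ B, d b • b) := by
      rw [← hrel, ← ev_sum P (fun b => b) c]
      congr 1
      rw [hPdef]
      rw [Finset.sum_filter]
      refine Finset.sum_congr rfl fun b _ => ?_
      by_cases hb : 0 < c b
      · rw [if_pos hb]
      · rw [if_neg hb]
        have : c b = 0 := by omega
        rw [this, zero_smul]
    have hXle : ∀ b₀ ∈ P, ev (∑ b ∈ B, d b • b) ≤ (UV (B.erase b₀))∗ := by
      intro b₀ hb₀
      rw [ev_sum B (fun b => b) d]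
      refine q_prod_le_kstar fun b hb => ?_
      rcases Nat.eq_zero_or_pos (d b) with h0 | hpos
      · rw [h0, pow_zero]; exact one_le_kstar
      · have hbne : b ≠ b₀ := by
          intro hEq
          rcases hdisj b with h | h
          · subst hEq; exact absurd (hcP b hb₀) (by omega)
          · omega
        have : b ∈ B.erase b₀ := Finset.mem_erase.2 ⟨hbne, hb⟩
        exact q_pow_le_kstar ((ev_le_UV this).trans le_kstar) _
    calc (UV B)∗ = (UV P)∗ * (UV Qs)∗ := by rw [hBsplit, q_add_kstar]
      _ ≤ ((∏ b ∈ P, ev b ^ c b)∗ *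
            ∑ b₀ ∈ P, ltp (ev b₀) (c b₀) * (∑ b ∈ P.erase b₀, ev b)∗) * (UV Qs)∗ :=
          mul_le_mul_left hcore _
      _ = ∑ b₀ ∈ P, (∏ b ∈ P, ev b ^ c b)∗ *
            (ltp (ev b₀) (c b₀) * (UV (P.erase b₀))∗) * (UV Qs)∗ := by
          rw [Finset.mul_sum, Finset.sum_mul]
          rfl
      _ ≤ ∑ b₀ ∈ P, ltp (ev b₀) (c b₀) * (UV (B.erase b₀))∗ := by
          refine Finset.sum_le_sum fun b₀ hb₀ => ?_
          have hz1 : (∏ b ∈ P, ev b ^ c b)∗ ≤ (UV (B.erase b₀))∗ := by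
            rw [hXv]
            exact q_kstar_le_kstar (hXle b₀ hb₀)
          have hz2 : (UV (P.erase b₀))∗ ≤ (UV (B.erase b₀))∗ :=
            kstar_mono (UV_le_of_subset (Finset.erase_subset_erase b₀ hPB))
          have hz3 : (UV Qs)∗ ≤ (UV (B.erase b₀))∗ := by
            refine kstar_mono (UV_le_of_subset fun b hb => ?_)
            have hb' := Finset.mem_filter.1 hb
            refine Finset.mem_erase.2 ⟨?_, hb'.1⟩
            intro hEq
            exact hb'.2 (hEq ▸ hcP b₀ hb₀)
          calc (∏ b ∈ P, ev b ^ c b)∗ * (ltp (ev b₀) (c b₀) * (UV (P.erase b₀))∗) * (UV Qs)∗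
              ≤ (UV (B.erase b₀))∗ * (ltp (ev b₀) (c b₀) * (UV (B.erase b₀))∗) *
                  (UV (B.erase b₀))∗ :=
                mul_le_mul' (mul_le_mul' hz1 (mul_le_mul_right hz2 _)) hz3
            _ = ltp (ev b₀) (c b₀) *
                  ((UV (B.erase b₀))∗ * (UV (B.erase b₀))∗ * (UV (B.erase b₀))∗) := by ring
            _ = ltp (ev b₀) (c b₀) * (UV (B.erase b₀))∗ := by
                rw [kstar_mul_kstar, kstar_mul_kstar]
  · -- the easy direction
    refine q_sum_le fun b₀ hb₀ => ?_
    have h1 : ltp (ev b₀) (c b₀) ≤ (UV B)∗ :=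
      (ltp_le_kstar _ _).trans (q_kstar_le_kstar ((ev_le_UV (hPB hb₀)).trans le_kstar))
    have h2 : (UV (B.erase b₀))∗ ≤ (UV B)∗ :=
      kstar_mono (UV_le_of_subset (Finset.erase_subset _ _))
    calc ltp (ev b₀) (c b₀) * (UV (B.erase b₀))∗ ≤ (UV B)∗ * (UV B)∗ := mul_le_mul' h1 h2
      _ = (UV B)∗ := kstar_mul_kstar _

/-- Assembling a finite sum of semilinear classes into a single semilinear class. -/
lemma exists_SL_sum_finset {ι : Type*} (s : Finset ι) (f : ι → Q α)
    (h : ∀ i ∈ s, ∃ L, (∀ p ∈ L, Independent p.2) ∧ f i = SL L) :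
    ∃ L, (∀ p ∈ L, Independent p.2) ∧ ∑ i ∈ s, f i = SL L := by
  induction s using Finset.cons_induction with
  | empty => exact ⟨[], by simp, by simp [SL_nil]⟩
  | cons a s ha ih =>
    obtain ⟨La, hLai, hLa⟩ := h a (Finset.mem_cons_self a s)
    obtain ⟨Ls, hLsi, hLs⟩ := ih fun i hi => h i (Finset.mem_cons_of_mem hi)
    refine ⟨La ++ Ls, ?_, ?_⟩
    · intro p hp
      rcases List.mem_append.1 hp with hp | hp
      · exact hLai p hp
      · exact hLsi p hp
    · rw [Finset.sum_cons, hLa, hLs, SL_append]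

lemma exists_SL_shift (w : α → ℕ) (L : List ((α → ℕ) × Finset (α → ℕ)))
    (hL : ∀ p ∈ L, Independent p.2) :
    ∃ L', (∀ p ∈ L', Independent p.2) ∧ ev w * SL L = SL L' := by
  refine ⟨L.map fun p => (w + p.1, p.2), ?_, SL_shift w L⟩
  intro p hp
  obtain ⟨q, hq, rfl⟩ := List.mem_map.1 hp
  exact hL q hq

/-- Every star of a finite union of vector expressions is a semilinear class with
independent periods. -/
theorem q_fixStar (B : Finset (α → ℕ)) :
    ∃ L, (∀ p ∈ L, Independent p.2) ∧ (UV B)∗ = SL L := by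
  classical
  induction B using Finset.strongInduction with
  | _ B ih =>
    by_cases hInd : Independent B
    · refine ⟨[(0, B)], ?_, ?_⟩
      · intro p hp
        rcases List.mem_singleton.1 hp with rfl
        exact hInd
      · rw [SL_cons, SL_nil, ev_zero, one_mul, add_zero]
    · obtain ⟨c, d, hrel, hdisj, hex⟩ := not_independent_rel hInd
      rw [q_step B c d hrel hdisj hex]
      refine exists_SL_sum_finset _ _ fun b₀ hb₀ => ?_
      have hb₀B : b₀ ∈ B := Finset.filter_subset _ _ hb₀
      obtain ⟨L0, hL0i, hL0⟩ := ih (B.erase b₀) (Finset.erase_ssubset hb₀B)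
      rw [hL0, ltp_eq_sum, Finset.sum_mul]
      refine exists_SL_sum_finset _ _ fun m _ => ?_
      have : ev b₀ ^ m * SL L0 = ev (m • b₀) * SL L0 := by rw [ev_smul]
      rw [this]
      exact exists_SL_shift _ _ hL0i

end FixStar
section Main

open Computability

lemma exists_SL_one : ∃ L, (∀ p ∈ L, Independent p.2) ∧ (1 : Q α) = SL L := by
  refine ⟨[(0, ∅)], ?_, ?_⟩
  · intro p hp
    rcases List.mem_singleton.1 hp with rfl
    exact Independent_empty
  · rw [SL_cons, SL_nil, ev_zero, UV_empty, kstar_zero, one_mul, add_zero]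

lemma exists_SL_lin_mul (u : α → ℕ) (Bs : Finset (α → ℕ)) (v : α → ℕ) (Cs : Finset (α → ℕ)) :
    ∃ L, (∀ p ∈ L, Independent p.2) ∧
      (ev u * (UV Bs)∗) * (ev v * (UV Cs)∗) = SL L := by
  obtain ⟨L0, h0i, h0⟩ := q_fixStar (Bs ∪ Cs)
  have key : (ev u * (UV Bs)∗) * (ev v * (UV Cs)∗) = ev (u + v) * (UV (Bs ∪ Cs))∗ := by
    rw [ev_add, UV_union, q_add_kstar]; ring
  rw [key, h0]
  exact exists_SL_shift _ _ h0i

lemma exists_SL_lin_mul_SL (u : α → ℕ) (Bs : Finset (α → ℕ))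
    (L₂ : List ((α → ℕ) × Finset (α → ℕ))) :
    ∃ L, (∀ p ∈ L, Independent p.2) ∧ (ev u * (UV Bs)∗) * SL L₂ = SL L := by
  induction L₂ with
  | nil => exact ⟨[], by simp, by rw [SL_nil, mul_zero]⟩
  | cons q L ih =>
    obtain ⟨La, hai, ha⟩ := exists_SL_lin_mul u Bs q.1 q.2
    obtain ⟨Lb, hbi, hb⟩ := ih
    refine ⟨La ++ Lb, ?_, ?_⟩
    · intro p hp
      rcases List.mem_append.1 hp with hp | hp
      · exact hai p hp
      · exact hbi p hp
    · rw [SL_cons, mul_add, ha, hb, SL_append]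

lemma exists_SL_mul (L₁ L₂ : List ((α → ℕ) × Finset (α → ℕ))) :
    ∃ L, (∀ p ∈ L, Independent p.2) ∧ SL L₁ * SL L₂ = SL L := by
  induction L₁ with
  | nil => exact ⟨[], by simp, by rw [SL_nil, zero_mul]⟩
  | cons p L ih =>
    obtain ⟨La, hai, ha⟩ := exists_SL_lin_mul_SL p.1 p.2 L₂
    obtain ⟨Lb, hbi, hb⟩ := ih
    refine ⟨La ++ Lb, ?_, ?_⟩
    · intro q hq
      rcases List.mem_append.1 hq with hq | hq
      · exact hai q hq
      · exact hbi q hq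
    · rw [SL_cons, add_mul, ha, hb, SL_append]

lemma exists_SL_kstar (L : List ((α → ℕ) × Finset (α → ℕ))) :
    ∃ L', (∀ p ∈ L', Independent p.2) ∧ (SL L)∗ = SL L' := by
  induction L with
  | nil =>
    obtain ⟨L1, h1i, h1⟩ := exists_SL_one (α := α)
    exact ⟨L1, h1i, by rw [SL_nil, kstar_zero, h1]⟩
  | cons p L ih =>
    obtain ⟨L2, h2i, h2⟩ := ih
    obtain ⟨L1, h1i, h1⟩ := q_fixStar (insert p.1 p.2)
    obtain ⟨L1', h1i', h1'⟩ := exists_SL_shift p.1 L1 h1i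
    have hstar : (ev p.1 * (UV p.2)∗)∗ = SL ((0, ∅) :: L1') := by
      rw [q_mul_kstar_star, SL_cons, ev_zero, UV_empty, kstar_zero, one_mul]
      congr 1
      rw [← h1', ← h1, ← UV_insert]
    have : (SL (p :: L))∗ = SL ((0, ∅) :: L1') * SL L2 := by
      rw [SL_cons, q_add_kstar, hstar, h2]
    rw [this]
    obtain ⟨L3, h3i, h3⟩ := exists_SL_mul ((0, ∅) :: L1') L2
    refine ⟨L3, h3i, h3⟩

theorem q_decomposition (e : CRE α) :
    ∃ L, (∀ p ∈ L, Independent p.2) ∧ mk e = SL L := by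
  induction e with
  | zero => exact ⟨[], by simp, rfl⟩
  | one =>
    obtain ⟨L, hi, h⟩ := exists_SL_one (α := α)
    exact ⟨L, hi, h⟩
  | letter a =>
    refine ⟨[(Pi.single a 1, ∅)], ?_, ?_⟩
    · intro p hp
      rcases List.mem_singleton.1 hp with rfl
      exact Independent_empty
    · rw [SL_cons, SL_nil, UV_empty, kstar_zero, mul_one, add_zero, ev_single]
  | mul e f ihe ihf =>
    obtain ⟨Le, hei, he⟩ := ihe
    obtain ⟨Lf, hfi, hf⟩ := ihf
    rw [mk_mul, he, hf]
    exact exists_SL_mul Le Lf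
  | union e f ihe ihf =>
    obtain ⟨Le, hei, he⟩ := ihe
    obtain ⟨Lf, hfi, hf⟩ := ihf
    refine ⟨Le ++ Lf, ?_, ?_⟩
    · intro p hp
      rcases List.mem_append.1 hp with hp | hp
      · exact hei p hp
      · exact hfi p hp
    · rw [mk_union, he, hf, SL_append]
  | star e ihe =>
    obtain ⟨Le, hei, he⟩ := ihe
    rw [mk_star, he]
    exact exists_SL_kstar Le

end Main

/-- Every commutative regular expression is provably equal to a finite
union of unambiguous linear expressions. -/
theorem decomposition (e : CRE α) :
    ∃ L : List ((α → ℕ) × Finset (α → ℕ)),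
      (∀ p ∈ L, Independent p.2) ∧ CKA e (semiLin L) := by
  obtain ⟨L, hi, h⟩ := q_decomposition e
  exact ⟨L, hi, mk_eq.mp (h.trans (mk_semiLin L).symm)⟩

end CKAnote
end
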